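/- arXiv:2012.14095 — 8 statements merged into one kernel-verified Lean document; each statement's English description precedes it below -/
import Mathlib

section
/- Let n ≥ 1 and m ≥ 1 be naturals, let X be the type of Boolean strings of length n, and let F be a nonempty finite set of functions X → Bool. Let D_F be the consistency distinguisher for F. Then: (i) the probability, over a uniformly random z : Fin m → X × Bool, that D_F(z) = true is at least 1 − |F|/2^m; (ii) for every f ∈ F and every x : Fin m → X, D_F applied to the sample list with i-th entry (x i, f (x i)) equals false; consequently (iii) for every f ∈ F, P_0(f, D_F) − P_m(f, D_F) ≥ 1 − |F|/2^m. In particular, if 2·|F| ≤ 2^m then the consistency distinguisher has distinguishing gap at least 1/2 against every f ∈ F. -/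
open scoped Classical
set_option maxHeartbeats 1000000

noncomputable def pr {α : Type*} [Fintype α] (p : α → Prop) : ℝ :=
  ((Finset.univ.filter p).card : ℝ) / (Fintype.card α)

def hybSample {n m : ℕ} (f : (Fin n → Bool) → Bool) (i : ℕ)
    (x : Fin m → (Fin n → Bool)) (r : Fin m → Bool) :
    Fin m → (Fin n → Bool) × Bool :=
  fun j => if (j : ℕ) < i then (x j, f (x j)) else (x j, r j)

noncomputable def hybProb {n m : ℕ} (f : (Fin n → Bool) → Bool)
    (D : (Fin m → (Fin n → Bool) × Bool) → Bool) (i : ℕ) : ℝ :=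
  pr (fun p : (Fin m → (Fin n → Bool)) × (Fin m → Bool) =>
    D (hybSample f i p.1 p.2) = true)

noncomputable def consistencyDistinguisher {n m : ℕ}
    (F : Finset ((Fin n → Bool) → Bool)) (z : Fin m → (Fin n → Bool) × Bool) : Bool :=
  decide (¬ ∃ f ∈ F, ∀ i : Fin m, (z i).2 = f ((z i).1))

lemma pr_congr {α : Type*} [Fintype α] {p q : α → Prop} (h : ∀ a, p a ↔ q a) :
    pr p = pr q :=
  congrArg pr (funext fun a => propext (h a))

lemma pr_comp_equiv {α β : Type*} [Fintype α] [Fintype β] (e : α ≃ β) (p : α → Prop) :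
    pr (fun b => p (e.symm b)) = pr p := by
  unfold pr
  rw [Fintype.card_congr e.symm]
  congr 1
  norm_cast
  apply Finset.card_bij (fun b _ => e.symm b)
  · intro b hb; simp only [Finset.mem_filter, Finset.mem_univ, true_and] at hb ⊢; exact hb
  · intro a _ b _ h; exact e.symm.injective h
  · intro a ha
    refine ⟨e a, ?_, by simp⟩
    simp only [Finset.mem_filter, Finset.mem_univ, true_and, Equiv.symm_apply_apply] at ha ⊢
    exact ha

lemma pr_false {α : Type*} [Fintype α] : pr (fun _ : α => False) = 0 := by
  unfold pr; simp

lemma filter_add_not_card {α : Type*} [Fintype α] (p : α → Prop)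
    (h1 : DecidablePred p) (h2 : DecidablePred fun a => ¬ p a) :
    (@Finset.filter α p h1 Finset.univ).card
      + (@Finset.filter α (fun a => ¬ p a) h2 Finset.univ).card = Fintype.card α := by
  have hset : @Finset.filter α (fun a => ¬ p a) h2 Finset.univ
      = Finset.univ \ @Finset.filter α p h1 Finset.univ := by
    ext a; simp
  have hle : (@Finset.filter α p h1 Finset.univ).card ≤ (Finset.univ : Finset α).card :=
    Finset.card_le_card (Finset.filter_subset _ _)
  rw [hset, Finset.card_sdiff_of_subset (Finset.filter_subset _ _), Finset.card_univ] at *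
  omega

lemma pr_compl {α : Type*} [Fintype α] [Nonempty α] (p : α → Prop) :
    pr p = 1 - pr (fun a => ¬ p a) := by
  have hpos : (0:ℝ) < Fintype.card α := by exact_mod_cast Fintype.card_pos
  unfold pr
  rw [eq_sub_iff_add_eq, ← add_div, div_eq_one_iff_eq hpos.ne']
  exact_mod_cast filter_add_not_card p _ _

lemma pr_not {α : Type*} [Fintype α] [Nonempty α] (p : α → Prop) :
    pr (fun a => ¬ p a) = 1 - pr p := by
  have h := pr_compl p; linarith

lemma pr_le {α : Type*} [Fintype α] (p : α → Prop) {inst : DecidablePred p} (k : ℕ)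
    (h : (@Finset.filter α p inst Finset.univ).card ≤ k) :
    pr p ≤ (k : ℝ) / Fintype.card α := by
  rw [Finset.filter_congr_decidable] at h
  unfold pr
  rcases Nat.eq_zero_or_pos (Fintype.card α) with h0 | h0
  · simp [h0]
  · have hpos : (0:ℝ) < Fintype.card α := by exact_mod_cast h0
    have hk : ((Finset.univ.filter p).card : ℝ) ≤ k := by exact_mod_cast h
    gcongr
    convert h using 3
    rfl

lemma count_consistent {n m : ℕ} (f : (Fin n → Bool) → Bool) :
    (Finset.univ.filter (fun z : Fin m → (Fin n → Bool) × Bool =>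
        ∀ i, (z i).2 = f ((z i).1))).card = (2 ^ n) ^ m := by
  have h2 : Fintype.card (Fin m → (Fin n → Bool)) = (2 ^ n) ^ m := by simp
  rw [← h2, ← Finset.card_univ]
  apply Finset.card_bij (fun z _ => fun i => (z i).1)
  · intro z _; exact Finset.mem_univ _
  · intro z₁ h₁ z₂ h₂ h
    simp only [Finset.mem_filter, Finset.mem_univ, true_and] at h₁ h₂
    funext i
    have h1 : (z₁ i).1 = (z₂ i).1 := congrFun h i
    have hsnd : (z₁ i).2 = (z₂ i).2 := by rw [h₁ i, h₂ i, h1]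
    exact Prod.ext h1 hsnd
  · intro x _
    refine ⟨fun i => (x i, f (x i)), ?_, rfl⟩
    simp

lemma pr_bad_le {n m : ℕ} (F : Finset ((Fin n → Bool) → Bool)) :
    pr (fun z : Fin m → (Fin n → Bool) × Bool =>
        ∃ f ∈ F, ∀ i, (z i).2 = f ((z i).1)) ≤ (F.card : ℝ) / 2 ^ m := by
  have hcard : (Finset.univ.filter (fun z : Fin m → (Fin n → Bool) × Bool =>
      ∃ f ∈ F, ∀ i, (z i).2 = f ((z i).1))).card ≤ F.card * (2 ^ n) ^ m := by
    have hsub : (Finset.univ.filter (fun z : Fin m → (Fin n → Bool) × Bool =>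
        ∃ f ∈ F, ∀ i, (z i).2 = f ((z i).1))) ⊆
        F.biUnion (fun f => Finset.univ.filter (fun z => ∀ i, (z i).2 = f ((z i).1))) := by
      intro z hz
      simp only [Finset.mem_filter, Finset.mem_univ, true_and] at hz
      obtain ⟨f, hf, hc⟩ := hz
      exact Finset.mem_biUnion.2 ⟨f, hf, by simp [hc]⟩
    refine le_trans (Finset.card_le_card hsub) (le_trans Finset.card_biUnion_le ?_)
    rw [Finset.sum_congr rfl (fun f _ => count_consistent f), Finset.sum_const, smul_eq_mul]
  have htotal : (Fintype.card (Fin m → (Fin n → Bool) × Bool) : ℝ) = (2 ^ n) ^ m * 2 ^ m := by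
    simp [mul_pow]
  refine (pr_le _ _ hcard).trans_eq ?_
  rw [htotal]
  have hA : ((2:ℝ) ^ n) ^ m ≠ 0 := by positivity
  have hB : ((2:ℝ) ^ m) ≠ 0 := by positivity
  push_cast
  field_simp

theorem stmt0 {n m : ℕ} (hn : 1 ≤ n) (hm : 1 ≤ m)
    (F : Finset ((Fin n → Bool) → Bool)) (hF : F.Nonempty) :
    (pr (fun z : Fin m → (Fin n → Bool) × Bool =>
        consistencyDistinguisher F z = true) ≥ 1 - (F.card : ℝ) / 2 ^ m) ∧
    (∀ f ∈ F, ∀ x : Fin m → (Fin n → Bool),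
        consistencyDistinguisher F (fun i => (x i, f (x i))) = false) ∧
    (∀ f ∈ F,
        hybProb f (consistencyDistinguisher (m := m) F) 0
          - hybProb f (consistencyDistinguisher (m := m) F) m
          ≥ 1 - (F.card : ℝ) / 2 ^ m) ∧
    (2 * F.card ≤ 2 ^ m → ∀ f ∈ F,
        hybProb f (consistencyDistinguisher (m := m) F) 0
          - hybProb f (consistencyDistinguisher (m := m) F) m ≥ 1 / 2) := by
  have hpart1 : pr (fun z : Fin m → (Fin n → Bool) × Bool =>
      consistencyDistinguisher F z = true) ≥ 1 - (F.card : ℝ) / 2 ^ m := by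
    have heq : pr (fun z : Fin m → (Fin n → Bool) × Bool =>
        consistencyDistinguisher F z = true)
        = pr (fun z : Fin m → (Fin n → Bool) × Bool =>
            ¬ ∃ f ∈ F, ∀ i, (z i).2 = f ((z i).1)) :=
      pr_congr (fun z => by simp [consistencyDistinguisher])
    rw [heq, pr_not]
    linarith [pr_bad_le (m := m) F]
  have hpart2 : ∀ f ∈ F, ∀ x : Fin m → (Fin n → Bool),
      consistencyDistinguisher F (fun i => (x i, f (x i))) = false := by
    intro f hf x
    simp only [consistencyDistinguisher, decide_eq_false_iff_not, not_not]
    exact ⟨f, hf, fun i => rfl⟩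
  have hpart3 : ∀ f ∈ F,
      hybProb f (consistencyDistinguisher (m := m) F) 0
        - hybProb f (consistencyDistinguisher (m := m) F) m
        ≥ 1 - (F.card : ℝ) / 2 ^ m := by
    intro f hf
    have h0 : hybProb f (consistencyDistinguisher (m := m) F) 0
        = pr (fun z : Fin m → (Fin n → Bool) × Bool =>
            consistencyDistinguisher F z = true) := by
      unfold hybProb
      have he : ∀ p : (Fin m → (Fin n → Bool)) × (Fin m → Bool),
          hybSample f 0 p.1 p.2
          = (Equiv.arrowProdEquivProdArrow (Fin m) (fun _ => Fin n → Bool) (fun _ => Bool)).symm p := by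
        intro p; funext j; simp [hybSample, Equiv.arrowProdEquivProdArrow]
      have hq : pr (fun p : (Fin m → (Fin n → Bool)) × (Fin m → Bool) =>
          consistencyDistinguisher F (hybSample f 0 p.1 p.2) = true)
          = pr (fun p : (Fin m → (Fin n → Bool)) × (Fin m → Bool) =>
              consistencyDistinguisher F
                ((Equiv.arrowProdEquivProdArrow (Fin m) (fun _ => Fin n → Bool) (fun _ => Bool)).symm p) = true) :=
        pr_congr (fun p => by rw [he p])
      rw [hq]
      exact pr_comp_equiv (Equiv.arrowProdEquivProdArrow (Fin m) (fun _ => Fin n → Bool) (fun _ => Bool))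
        (fun z => consistencyDistinguisher F z = true)
    have hmm : hybProb f (consistencyDistinguisher (m := m) F) m = 0 := by
      unfold hybProb
      have hq : pr (fun p : (Fin m → (Fin n → Bool)) × (Fin m → Bool) =>
          consistencyDistinguisher F (hybSample f m p.1 p.2) = true)
          = pr (fun _ : (Fin m → (Fin n → Bool)) × (Fin m → Bool) => False) := by
        refine pr_congr (fun p => ?_)
        simp only [iff_false]
        have hsamp : hybSample f m p.1 p.2 = fun j => (p.1 j, f (p.1 j)) := by
          funext j; simp [hybSample, j.isLt]
        rw [hsamp, hpart2 f hf p.1]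
        simp
      rw [hq, pr_false]
    rw [h0, hmm]
    simpa using hpart1
  refine ⟨hpart1, hpart2, hpart3, ?_⟩
  intro h2 f hf
  have h3 := hpart3 f hf
  have hb : (F.card : ℝ) / 2 ^ m ≤ 1 / 2 := by
    rw [div_le_div_iff₀ (by positivity) (by norm_num)]
    have hc : (2 * F.card : ℝ) ≤ (2 : ℝ) ^ m := by exact_mod_cast h2
    linarith
  linarith
end

section
/- Let n ≥ 1 and m ≥ 1 be naturals, let X be the type of Boolean strings of length n, let f : X → Bool, let D : (Fin m → X × Bool) → Bool, and let i ∈ Fin m. Then the probability, over uniformly random x : Fin m → X and r : Fin m → Bool, that the predictor value g_{i,r,x}(x i) equals f (x i) is exactly 1/2 + P_i(f,D) − P_{i+1}(f,D). -/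
open scoped Classical

/-- The sample list used by the predictor: the `j`-th entry is `(x j, f (x j))`
for `j < i`, `(y, r i)` for `j = i`, and `(x j, r j)` for `j > i`. -/
def predSample {n m : ℕ} (f : (Fin n → Bool) → Bool) (i : Fin m)
    (r : Fin m → Bool) (x : Fin m → (Fin n → Bool)) (y : Fin n → Bool) :
    Fin m → (Fin n → Bool) × Bool :=
  fun j => if (j : ℕ) < (i : ℕ) then (x j, f (x j))
    else if j = i then (y, r i) else (x j, r j)

/-- The `(D, f)`-predictor `g_{i,r,x}`. -/
def predictor {n m : ℕ} (f : (Fin n → Bool) → Bool)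
    (D : (Fin m → (Fin n → Bool) × Bool) → Bool) (i : Fin m)
    (r : Fin m → Bool) (x : Fin m → (Fin n → Bool)) (y : Fin n → Bool) : Bool :=
  if D (predSample f i r x y) = true then !(r i) else r i

/-- Auxiliary: real-valued indicator of a proposition. -/
noncomputable def ind (c : Prop) : ℝ := if c then 1 else 0

theorem ind_pos {c : Prop} (h : c) : ind c = 1 := if_pos h

theorem ind_neg {c : Prop} (h : ¬ c) : ind c = 0 := if_neg h

theorem ind_congr {c d : Prop} (h : c ↔ d) : ind c = ind d := by
  unfold ind; exact if_congr h rfl rfl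

theorem pr_eq_sum_ind {α : Type*} [Fintype α] (q : α → Prop) :
    pr q = (∑ x : α, ind (q x)) / (Fintype.card α) := by
  unfold pr ind
  rw [Finset.sum_boole]

theorem stmt2 {n m : ℕ} (hn : 1 ≤ n) (hm : 1 ≤ m)
    (f : (Fin n → Bool) → Bool)
    (D : (Fin m → (Fin n → Bool) × Bool) → Bool) (i : Fin m) :
    pr (fun p : (Fin m → (Fin n → Bool)) × (Fin m → Bool) =>
        predictor f D i p.2 p.1 (p.1 i) = f (p.1 i))
      = 1 / 2 + hybProb f D i - hybProb f D ((i : ℕ) + 1) := by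
  classical
  set Ω := (Fin m → (Fin n → Bool)) × (Fin m → Bool) with hΩ
  set flip : Ω → Ω := fun p => (p.1, Function.update p.2 i (!(p.2 i))) with hflipdef
  have hflip : ∀ p, flip (flip p) = p := by
    intro p
    simp only [hflipdef]
    ext <;> simp [Function.update_idem]
  have hSflip : ∀ p : Ω, ((flip p).2 i = f ((flip p).1 i)) ↔ ¬ (p.2 i = f (p.1 i)) := by
    intro p
    simp only [hflipdef, Function.update_self]
    cases p.2 i <;> cases f (p.1 i) <;> simp
  have hyb1flip : ∀ p : Ω, hybSample f ((i : ℕ) + 1) (flip p).1 (flip p).2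
      = hybSample f ((i : ℕ) + 1) p.1 p.2 := by
    intro p
    funext j
    simp only [hflipdef, hybSample]
    by_cases h : (j : ℕ) < (i : ℕ) + 1
    · simp [h]
    · have hne : j ≠ i := by
        intro he; subst he; omega
      simp [h, Function.update_of_ne hne]
  have hybSeq : ∀ p : Ω, p.2 i = f (p.1 i) →
      hybSample f (i : ℕ) p.1 p.2 = hybSample f ((i : ℕ) + 1) p.1 p.2 := by
    intro p hp
    funext j
    simp only [hybSample]
    by_cases h : (j : ℕ) < (i : ℕ)
    · simp [h, Nat.lt_succ_of_lt h]
    · by_cases h2 : (j : ℕ) < (i : ℕ) + 1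
      · have hji : j = i := Fin.ext (by omega)
        subst hji
        simp [h, h2, hp]
      · simp [h, h2]
  have predEq : ∀ p : Ω, predSample f i p.2 p.1 (p.1 i) = hybSample f (i : ℕ) p.1 p.2 := by
    intro p
    funext j
    simp only [predSample, hybSample]
    by_cases h : (j : ℕ) < (i : ℕ)
    · simp [h]
    · by_cases h2 : j = i
      · subst h2; simp [h]
      · simp [h, h2]
  have hevent : ∀ p : Ω, (predictor f D i p.2 p.1 (p.1 i) = f (p.1 i))
      ↔ ((p.2 i = f (p.1 i)) ∧ ¬ (D (hybSample f (i : ℕ) p.1 p.2) = true)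
        ∨ (¬ (p.2 i = f (p.1 i))) ∧ D (hybSample f (i : ℕ) p.1 p.2) = true) := by
    intro p
    simp only [predictor, predEq p]
    by_cases hD : D (hybSample f (i : ℕ) p.1 p.2) = true
    · simp only [hD, if_true]
      cases hr : p.2 i <;> cases hf : f (p.1 i) <;> simp
    · simp only [hD, if_false]
      cases hr : p.2 i <;> cases hf : f (p.1 i) <;> simp [hD]
  -- put the goal in indicator-sum form
  unfold hybProb
  rw [pr_eq_sum_ind, pr_eq_sum_ind, pr_eq_sum_ind]
  set N : ℕ := Fintype.card Ω with hN
  have hNpos : 0 < N := Fintype.card_pos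
  set a : ℝ := ∑ p : Ω, ind (predictor f D i p.2 p.1 (p.1 i) = f (p.1 i)) with ha
  set ti : ℝ := ∑ p : Ω, ind (D (hybSample f (i : ℕ) p.1 p.2) = true) with hti
  set t1 : ℝ := ∑ p : Ω, ind (D (hybSample f ((i : ℕ) + 1) p.1 p.2) = true) with ht1
  set s : ℝ := ∑ p : Ω, ind (p.2 i = f (p.1 i)) with hs
  set sdi : ℝ := ∑ p : Ω,
    ind ((p.2 i = f (p.1 i)) ∧ D (hybSample f (i : ℕ) p.1 p.2) = true) with hsdi
  -- master identity
  have h1 : a + 2 * sdi = s + ti := by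
    rw [ha, hsdi, hs, hti, Finset.mul_sum, ← Finset.sum_add_distrib,
      ← Finset.sum_add_distrib]
    apply Finset.sum_congr rfl
    intro p _
    by_cases hsp : p.2 i = f (p.1 i) <;>
      by_cases hdp : D (hybSample f (i : ℕ) p.1 p.2) = true
    · rw [ind_neg (by rw [hevent p]; tauto), ind_pos ⟨hsp, hdp⟩,
        ind_pos hsp, ind_pos hdp]; norm_num
    · rw [ind_pos (by rw [hevent p]; tauto), ind_neg (by tauto),
        ind_pos hsp, ind_neg hdp]; norm_num
    · rw [ind_pos (by rw [hevent p]; tauto), ind_neg (by tauto),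
        ind_neg hsp, ind_pos hdp]; norm_num
    · rw [ind_neg (by rw [hevent p]; tauto), ind_neg (by tauto),
        ind_neg hsp, ind_neg hdp]; norm_num
  -- sdi with Di replaced by Di1
  have h2 : sdi = ∑ p : Ω,
      ind ((p.2 i = f (p.1 i)) ∧ D (hybSample f ((i : ℕ) + 1) p.1 p.2) = true) := by
    rw [hsdi]
    apply Finset.sum_congr rfl
    intro p _
    apply ind_congr
    constructor
    · rintro ⟨h', h''⟩; exact ⟨h', by rw [← hybSeq p h']; exact h''⟩
    · rintro ⟨h', h''⟩; exact ⟨h', by rw [hybSeq p h']; exact h''⟩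
  -- flip symmetry
  let e : Ω ≃ Ω := ⟨flip, flip, hflip, hflip⟩
  have h3 : (∑ p : Ω,
      ind ((p.2 i = f (p.1 i)) ∧ D (hybSample f ((i : ℕ) + 1) p.1 p.2) = true))
      = ∑ p : Ω,
        ind (¬ (p.2 i = f (p.1 i)) ∧ D (hybSample f ((i : ℕ) + 1) p.1 p.2) = true) := by
    rw [← Equiv.sum_comp e (fun p : Ω =>
      ind (¬ (p.2 i = f (p.1 i)) ∧ D (hybSample f ((i : ℕ) + 1) p.1 p.2) = true))]
    apply Finset.sum_congr rfl
    intro p _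
    show ind ((p.2 i = f (p.1 i)) ∧ D (hybSample f ((i : ℕ) + 1) p.1 p.2) = true)
      = ind (¬ ((flip p).2 i = f ((flip p).1 i))
          ∧ D (hybSample f ((i : ℕ) + 1) (flip p).1 (flip p).2) = true)
    apply ind_congr
    rw [hyb1flip p]
    constructor
    · rintro ⟨h', h''⟩
      exact ⟨fun hc => (hSflip p).mp hc h', h''⟩
    · rintro ⟨h', h''⟩
      refine ⟨?_, h''⟩
      by_contra hc
      exact h' ((hSflip p).mpr hc)
  -- t1 splits
  have h4 : t1 = (∑ p : Ω,
      ind ((p.2 i = f (p.1 i)) ∧ D (hybSample f ((i : ℕ) + 1) p.1 p.2) = true))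
      + ∑ p : Ω,
        ind (¬ (p.2 i = f (p.1 i)) ∧ D (hybSample f ((i : ℕ) + 1) p.1 p.2) = true) := by
    rw [ht1, ← Finset.sum_add_distrib]
    apply Finset.sum_congr rfl
    intro p _
    by_cases hsp : p.2 i = f (p.1 i) <;>
      by_cases hdp : D (hybSample f ((i : ℕ) + 1) p.1 p.2) = true
    · rw [ind_pos hdp, ind_pos ⟨hsp, hdp⟩, ind_neg (by tauto)]; norm_num
    · rw [ind_neg hdp, ind_neg (by tauto), ind_neg (by tauto)]; norm_num
    · rw [ind_pos hdp, ind_neg (by tauto), ind_pos ⟨hsp, hdp⟩]; norm_num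
    · rw [ind_neg hdp, ind_neg (by tauto), ind_neg (by tauto)]; norm_num
  have ht1sdi : t1 = 2 * sdi := by
    rw [h4, ← h3, ← h2]; ring
  -- 2 s = N
  have h5 : s = ∑ p : Ω, ind (¬ (p.2 i = f (p.1 i))) := by
    rw [hs, ← Equiv.sum_comp e (fun p : Ω => ind (¬ (p.2 i = f (p.1 i))))]
    apply Finset.sum_congr rfl
    intro p _
    show ind (p.2 i = f (p.1 i)) = ind (¬ ((flip p).2 i = f ((flip p).1 i)))
    apply ind_congr
    constructor
    · intro h' hc
      exact (hSflip p).mp hc h'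
    · intro h'
      by_contra hc
      exact h' ((hSflip p).mpr hc)
  have h6 : 2 * s = (N : ℝ) := by
    have hsum : s + (∑ p : Ω, ind (¬ (p.2 i = f (p.1 i)))) = (N : ℝ) := by
      rw [hs, ← Finset.sum_add_distrib]
      have hpt : ∀ p : Ω, ind (p.2 i = f (p.1 i)) + ind (¬ (p.2 i = f (p.1 i))) = 1 := by
        intro p
        by_cases hsp : p.2 i = f (p.1 i)
        · rw [ind_pos hsp, ind_neg (by tauto)]; norm_num
        · rw [ind_neg hsp, ind_pos hsp]; norm_num
      rw [Finset.sum_congr rfl (fun p _ => hpt p)]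
      simp [hN]
    rw [← h5] at hsum
    linarith
  -- conclude
  have hNne : (N : ℝ) ≠ 0 := Nat.cast_ne_zero.mpr hNpos.ne'
  have hfin : a = s + ti - t1 := by linarith [h1, ht1sdi]
  rw [hfin]
  field_simp
  ring_nf
  nlinarith [h6]
end

section
/- (Probabilistic content of Lemma 4, Blum–Furst–Kearns–Lipton.) Let n ≥ 1 and m ≥ 1 be naturals, let s ≥ 1 be a real number, let X be the type of Boolean strings of length n, let f : X → Bool, and let D : (Fin m → X × Bool) → Bool satisfy P_0(f,D) − P_m(f,D) ≥ 1/s. Then, with probability at least 1/(2·m²·s) over a uniformly random triple (i, r, x) ∈ Fin m × (Fin m → Bool) × (Fin m → X), the predictor g_{i,r,x} satisfies: the probability over a uniformly random y ∈ X that g_{i,r,x}(y) = f(y) is at least 1/2 + 1/(2·m·s). -/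
open scoped Classical

/- ## Auxiliary lemmas -/

lemma pr_eq_sum {α : Type*} [Fintype α] (p : α → Prop) :
    pr p = (∑ a, if p a then (1:ℝ) else 0) / Fintype.card α := by
  unfold pr
  rw [Finset.sum_boole]

lemma pr_nonneg {α : Type*} [Fintype α] (p : α → Prop) : 0 ≤ pr p := by
  unfold pr
  positivity

lemma pr_le_one {α : Type*} [Fintype α] (p : α → Prop) : pr p ≤ 1 := by
  unfold pr
  apply div_le_one_of_le₀
  · exact_mod_cast Finset.card_filter_le _ _
  · positivity

lemma sum_update_eq {α β : Type*} [Fintype α] [Fintype β] [DecidableEq α]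
    (i : α) (F : (α → β) → ℝ) :
    ∑ p : (α → β) × β, F (Function.update p.1 i p.2)
      = (Fintype.card β) * ∑ x, F x := by
  have hinv : Function.Involutive
      (fun p : (α → β) × β => (Function.update p.1 i p.2, p.1 i)) := by
    intro p
    simp [Function.update_idem, Function.update_self, Function.update_eq_self]
  have h1 := Fintype.sum_bijective _ hinv.bijective
      (fun p : (α → β) × β => F (Function.update p.1 i p.2))
      (fun p : (α → β) × β => F p.1) (fun p => rfl)
  rw [h1, Fintype.sum_prod_type]
  simp [Finset.sum_const, mul_comm, Finset.mul_sum]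

lemma sum_update_eq' {α β : Type*} [Fintype α] [Fintype β] [DecidableEq α]
    (i : α) (F : (α → β) → ℝ) :
    ∑ x : α → β, ∑ y : β, F (Function.update x i y)
      = (Fintype.card β) * ∑ x, F x := by
  rw [← sum_update_eq i F, Fintype.sum_prod_type]

lemma sum_cond_half {m : ℕ} (i : Fin m) (P : (Fin m → Bool) → Prop)
    [DecidablePred P]
    (hP : ∀ r c, P (Function.update r i c) ↔ P r) (b : Bool) :
    ∑ r : Fin m → Bool, (if P r ∧ r i = b then (1:ℝ) else 0)
      = (1/2) * ∑ r : Fin m → Bool, (if P r then (1:ℝ) else 0) := by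
  have hinv : Function.Involutive
      (fun r : Fin m → Bool => Function.update r i (!(r i))) := by
    intro r
    simp [Function.update_idem, Function.update_self, Function.update_eq_self]
  have h1 := Fintype.sum_bijective _ hinv.bijective
      (fun r : Fin m → Bool => if P r ∧ r i = b then (1:ℝ) else 0)
      (fun r : Fin m → Bool => if P r ∧ r i = !b then (1:ℝ) else 0)
      (by
        intro r
        have h2 : P (Function.update r i (!(r i))) ↔ P r := hP r _
        have h3 : (Function.update r i (!(r i))) i = !(r i) := Function.update_self _ _ _
        simp only [h3]
        have h4 : (!(r i) = b) ↔ (r i = !b) := by cases b <;> cases r i <;> simp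
        simp [h2, h4])
  have h5 : ∀ r : Fin m → Bool,
      (if P r ∧ r i = b then (1:ℝ) else 0) + (if P r ∧ r i = !b then (1:ℝ) else 0)
        = (if P r then (1:ℝ) else 0) := by
    intro r
    by_cases hp : P r
    · by_cases hb : r i = b
      · have : ¬ (r i = !b) := by rw [hb]; cases b <;> simp
        simp [hp, hb, this]
      · have : r i = !b := by cases b <;> cases hri : r i <;> simp_all
        simp [hp, hb, this]
    · simp [hp]
  have h6 : ∑ r : Fin m → Bool, ((if P r ∧ r i = b then (1:ℝ) else 0)
      + (if P r ∧ r i = !b then (1:ℝ) else 0))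
      = ∑ r : Fin m → Bool, (if P r then (1:ℝ) else 0) :=
    Finset.sum_congr rfl (fun r _ => h5 r)
  rw [Finset.sum_add_distrib] at h6
  rw [← h1] at h6
  linarith

lemma predSample_eq_hyb {n m : ℕ} (f : (Fin n → Bool) → Bool) (i : Fin m)
    (r : Fin m → Bool) (x : Fin m → (Fin n → Bool)) (y : Fin n → Bool) :
    predSample f i r x y = hybSample f i (Function.update x i y) r := by
  funext j
  unfold predSample hybSample
  by_cases h1 : (j : ℕ) < (i : ℕ)
  · have hne : j ≠ i := by intro hh; subst hh; exact lt_irrefl _ h1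
    simp [h1, Function.update_of_ne hne]
  · by_cases h2 : j = i
    · subst h2; simp [h1, Function.update_self]
    · simp [h1, h2, Function.update_of_ne h2]

lemma predSample_eq_hyb_succ {n m : ℕ} (f : (Fin n → Bool) → Bool) (i : Fin m)
    (r : Fin m → Bool) (x : Fin m → (Fin n → Bool)) (y : Fin n → Bool)
    (hb : r i = f y) :
    predSample f i r x y = hybSample f ((i : ℕ) + 1) (Function.update x i y) r := by
  funext j
  unfold predSample hybSample
  by_cases h1 : (j : ℕ) < (i : ℕ)
  · have hne : j ≠ i := by intro hh; subst hh; exact lt_irrefl _ h1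
    have h1' : (j : ℕ) < (i : ℕ) + 1 := Nat.lt_succ_of_lt h1
    simp [h1, h1', Function.update_of_ne hne]
  · by_cases h2 : j = i
    · subst h2
      simp [h1, Nat.lt_succ_self, Function.update_self, hb]
    · have hne : (j : ℕ) ≠ (i : ℕ) := fun hh => h2 (Fin.ext hh)
      have h1' : ¬ ((j : ℕ) < (i : ℕ) + 1) := by omega
      simp [h1, h1', h2, Function.update_of_ne h2]

lemma hyb_succ_update {n m : ℕ} (f : (Fin n → Bool) → Bool) (i : Fin m)
    (x : Fin m → (Fin n → Bool)) (r : Fin m → Bool) (c : Bool) :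
    hybSample f ((i : ℕ) + 1) x (Function.update r i c)
      = hybSample f ((i : ℕ) + 1) x r := by
  funext j
  unfold hybSample
  by_cases h : (j : ℕ) < (i : ℕ) + 1
  · simp [h]
  · have hne : j ≠ i := by
      intro hh; subst hh; exact h (Nat.lt_succ_self _)
    simp [h, Function.update_of_ne hne]

lemma ind_pred {n m : ℕ} (f : (Fin n → Bool) → Bool)
    (D : (Fin m → (Fin n → Bool) × Bool) → Bool) (i : Fin m)
    (r : Fin m → Bool) (x : Fin m → (Fin n → Bool)) (y : Fin n → Bool) :
    (if predictor f D i r x y = f y then (1:ℝ) else 0)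
      = (if D (predSample f i r x y) = true then (1:ℝ) else 0)
        + (if r i = f y then (1:ℝ) else 0)
        - 2 * (if D (predSample f i r x y) = true ∧ r i = f y then (1:ℝ) else 0) := by
  unfold predictor
  cases hD : D (predSample f i r x y) <;> cases hr : r i <;> cases hf : f y <;>
    simp [hD, hr, hf] <;> norm_num

/-- The unnormalized count behind `hybProb`. -/
noncomputable def sumHyb {n m : ℕ} (f : (Fin n → Bool) → Bool)
    (D : (Fin m → (Fin n → Bool) × Bool) → Bool) (k : ℕ) : ℝ :=
  ∑ x : Fin m → (Fin n → Bool), ∑ r : Fin m → Bool,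
    if D (hybSample f k x r) = true then (1:ℝ) else 0

lemma hybProb_eq {n m : ℕ} (f : (Fin n → Bool) → Bool)
    (D : (Fin m → (Fin n → Bool) × Bool) → Bool) (k : ℕ) :
    hybProb f D k
      = sumHyb f D k / ((Fintype.card (Fin m → (Fin n → Bool)) : ℝ)
          * (Fintype.card (Fin m → Bool) : ℝ)) := by
  rw [hybProb, pr_eq_sum, Fintype.sum_prod_type]
  rw [Fintype.card_prod]
  push_cast
  unfold sumHyb
  congr 1
  exact Finset.sum_congr rfl fun x _ => Finset.sum_congr rfl fun r _ => by congr

lemma T_eq {n m : ℕ} (f : (Fin n → Bool) → Bool)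
    (D : (Fin m → (Fin n → Bool) × Bool) → Bool) (i : Fin m) :
    (∑ x : Fin m → (Fin n → Bool), ∑ y : Fin n → Bool, ∑ r : Fin m → Bool,
        if predictor f D i r x y = f y then (1:ℝ) else 0)
      = (Fintype.card (Fin m → Bool) : ℝ) * (Fintype.card (Fin m → (Fin n → Bool)) : ℝ)
          * (Fintype.card (Fin n → Bool) : ℝ) / 2
        + (Fintype.card (Fin n → Bool) : ℝ) * sumHyb f D i
        - (Fintype.card (Fin n → Bool) : ℝ) * sumHyb f D ((i : ℕ) + 1) := by
  have hS1 : (∑ x : Fin m → (Fin n → Bool), ∑ y : Fin n → Bool, ∑ r : Fin m → Bool,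
        if D (predSample f i r x y) = true then (1:ℝ) else 0)
      = (Fintype.card (Fin n → Bool) : ℝ) * sumHyb f D i := by
    have e : ∀ (x : Fin m → (Fin n → Bool)) (y : Fin n → Bool),
        (∑ r : Fin m → Bool, if D (predSample f i r x y) = true then (1:ℝ) else 0)
          = (fun x' => ∑ r : Fin m → Bool,
              if D (hybSample f i x' r) = true then (1:ℝ) else 0)
            (Function.update x i y) := by
      intro x y
      simp only [predSample_eq_hyb]
    calc (∑ x : Fin m → (Fin n → Bool), ∑ y : Fin n → Bool, ∑ r : Fin m → Bool,
          if D (predSample f i r x y) = true then (1:ℝ) else 0)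
        = ∑ x : Fin m → (Fin n → Bool), ∑ y : Fin n → Bool,
            (fun x' => ∑ r : Fin m → Bool,
              if D (hybSample f i x' r) = true then (1:ℝ) else 0)
            (Function.update x i y) :=
          Finset.sum_congr rfl fun x _ => Finset.sum_congr rfl fun y _ => e x y
      _ = (Fintype.card (Fin n → Bool) : ℝ) * sumHyb f D i := by
          rw [sum_update_eq' i (fun x' => ∑ r : Fin m → Bool,
              if D (hybSample f (i : ℕ) x' r) = true then (1:ℝ) else 0)]
          unfold sumHyb
          rfl
  have hS2 : (∑ x : Fin m → (Fin n → Bool), ∑ y : Fin n → Bool, ∑ r : Fin m → Bool,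
        if r i = f y then (1:ℝ) else 0)
      = (Fintype.card (Fin m → (Fin n → Bool)) : ℝ) * (Fintype.card (Fin n → Bool) : ℝ)
          * ((Fintype.card (Fin m → Bool) : ℝ) / 2) := by
    have e : ∀ y : Fin n → Bool,
        (∑ r : Fin m → Bool, if r i = f y then (1:ℝ) else 0)
          = (Fintype.card (Fin m → Bool) : ℝ) / 2 := by
      intro y
      have h := sum_cond_half i (fun _ => True) (fun r c => Iff.rfl) (f y)
      simp only [true_and, if_true] at h
      rw [h, Finset.sum_const, Finset.card_univ, nsmul_eq_mul, mul_one]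
      ring
    simp only [e, Finset.sum_const, Finset.card_univ, nsmul_eq_mul]
    ring
  have hS3 : (∑ x : Fin m → (Fin n → Bool), ∑ y : Fin n → Bool, ∑ r : Fin m → Bool,
        if D (predSample f i r x y) = true ∧ r i = f y then (1:ℝ) else 0)
      = (Fintype.card (Fin n → Bool) : ℝ) * sumHyb f D ((i : ℕ) + 1) / 2 := by
    have e2 : ∀ (x : Fin m → (Fin n → Bool)) (y : Fin n → Bool),
        (∑ r : Fin m → Bool,
            if D (predSample f i r x y) = true ∧ r i = f y then (1:ℝ) else 0)
          = (fun x' => (1/2) * ∑ r : Fin m → Bool,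
              if D (hybSample f ((i : ℕ) + 1) x' r) = true then (1:ℝ) else 0)
            (Function.update x i y) := by
      intro x y
      have ptw : ∀ r : Fin m → Bool,
          (if D (predSample f i r x y) = true ∧ r i = f y then (1:ℝ) else 0)
            = (if D (hybSample f ((i : ℕ) + 1) (Function.update x i y) r) = true
                ∧ r i = f ((Function.update x i y) i) then (1:ℝ) else 0) := by
        intro r
        rw [Function.update_self]
        by_cases hb : r i = f y
        · rw [predSample_eq_hyb_succ f i r x y hb]
        · simp [hb]
      simp only [ptw]
      exact sum_cond_half i
        (fun r => D (hybSample f ((i : ℕ) + 1) (Function.update x i y) r) = true)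
        (fun r c => by
          have hupd := hyb_succ_update f i (Function.update x i y) r c
          simp only [hupd]) (f ((Function.update x i y) i))
    calc (∑ x : Fin m → (Fin n → Bool), ∑ y : Fin n → Bool, ∑ r : Fin m → Bool,
          if D (predSample f i r x y) = true ∧ r i = f y then (1:ℝ) else 0)
        = ∑ x : Fin m → (Fin n → Bool), ∑ y : Fin n → Bool,
            (fun x' => (1/2) * ∑ r : Fin m → Bool,
              if D (hybSample f ((i : ℕ) + 1) x' r) = true then (1:ℝ) else 0)
            (Function.update x i y) :=
          Finset.sum_congr rfl fun x _ => Finset.sum_congr rfl fun y _ => e2 x y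
      _ = (Fintype.card (Fin n → Bool) : ℝ) * sumHyb f D ((i : ℕ) + 1) / 2 := by
          rw [sum_update_eq' i (fun x' => (1/2) * ∑ r : Fin m → Bool,
              if D (hybSample f ((i : ℕ) + 1) x' r) = true then (1:ℝ) else 0)]
          rw [← Finset.mul_sum]
          unfold sumHyb
          ring
  have e1 : (∑ x : Fin m → (Fin n → Bool), ∑ y : Fin n → Bool, ∑ r : Fin m → Bool,
        if predictor f D i r x y = f y then (1:ℝ) else 0)
      = (∑ x : Fin m → (Fin n → Bool), ∑ y : Fin n → Bool, ∑ r : Fin m → Bool,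
          ((if D (predSample f i r x y) = true then (1:ℝ) else 0)
            + (if r i = f y then (1:ℝ) else 0)
            - 2 * (if D (predSample f i r x y) = true ∧ r i = f y then (1:ℝ) else 0))) :=
    Finset.sum_congr rfl fun x _ => Finset.sum_congr rfl fun y _ =>
      Finset.sum_congr rfl fun r _ => ind_pred f D i r x y
  rw [e1]
  simp only [Finset.sum_add_distrib, Finset.sum_sub_distrib, ← Finset.mul_sum]
  rw [hS1, hS2, hS3]
  ring

set_option maxHeartbeats 1000000 in
theorem stmt3 {n m : ℕ} (hn : 1 ≤ n) (hm : 1 ≤ m) (s : ℝ) (hs : 1 ≤ s)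
    (f : (Fin n → Bool) → Bool)
    (D : (Fin m → (Fin n → Bool) × Bool) → Bool)
    (h : hybProb f D 0 - hybProb f D m ≥ 1 / s) :
    pr (fun t : Fin m × (Fin m → Bool) × (Fin m → (Fin n → Bool)) =>
        pr (fun y : Fin n → Bool => predictor f D t.1 t.2.1 t.2.2 y = f y)
          ≥ 1 / 2 + 1 / (2 * m * s))
      ≥ 1 / (2 * m ^ 2 * s) := by
  have hm1 : (1:ℝ) ≤ (m:ℝ) := by exact_mod_cast hm
  have hm0 : (0:ℝ) < (m:ℝ) := lt_of_lt_of_le one_pos hm1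
  have hs0 : (0:ℝ) < s := lt_of_lt_of_le one_pos hs
  have hcX0 : (0:ℝ) < (Fintype.card (Fin n → Bool) : ℝ) := by
    exact_mod_cast Fintype.card_pos
  have hcR0 : (0:ℝ) < (Fintype.card (Fin m → Bool) : ℝ) := by
    exact_mod_cast Fintype.card_pos
  have hcXX0 : (0:ℝ) < (Fintype.card (Fin m → (Fin n → Bool)) : ℝ) := by
    exact_mod_cast Fintype.card_pos
  -- the gap in unnormalized form
  have hΔ : (Fintype.card (Fin m → (Fin n → Bool)) : ℝ) * (Fintype.card (Fin m → Bool) : ℝ) / s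
      ≤ sumHyb f D 0 - sumHyb f D m := by
    rw [hybProb_eq f D 0, hybProb_eq f D m, div_sub_div_same] at h
    rw [ge_iff_le, div_le_div_iff₀ hs0 (by exact mul_pos hcXX0 hcR0)] at h
    rw [div_le_iff₀ hs0]
    linarith
  -- total mass of the inner probabilities
  have hQ : (∑ t : Fin m × (Fin m → Bool) × (Fin m → (Fin n → Bool)),
        pr (fun y : Fin n → Bool => predictor f D t.1 t.2.1 t.2.2 y = f y))
      = (m:ℝ) * (Fintype.card (Fin m → Bool) : ℝ)
          * (Fintype.card (Fin m → (Fin n → Bool)) : ℝ) / 2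
        + (sumHyb f D 0 - sumHyb f D m) := by
    have step1 : (∑ t : Fin m × (Fin m → Bool) × (Fin m → (Fin n → Bool)),
          pr (fun y : Fin n → Bool => predictor f D t.1 t.2.1 t.2.2 y = f y))
        = ∑ i : Fin m, ∑ r : Fin m → Bool, ∑ x : Fin m → (Fin n → Bool),
            pr (fun y : Fin n → Bool => predictor f D i r x y = f y) := by
      rw [Fintype.sum_prod_type]
      exact Finset.sum_congr rfl fun i _ => Fintype.sum_prod_type _
    rw [step1]
    have step2 : ∀ i : Fin m, (∑ r : Fin m → Bool, ∑ x : Fin m → (Fin n → Bool),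
          pr (fun y : Fin n → Bool => predictor f D i r x y = f y))
        = ((Fintype.card (Fin m → Bool) : ℝ) * (Fintype.card (Fin m → (Fin n → Bool)) : ℝ)
              * (Fintype.card (Fin n → Bool) : ℝ) / 2
            + (Fintype.card (Fin n → Bool) : ℝ) * sumHyb f D (i : ℕ)
            - (Fintype.card (Fin n → Bool) : ℝ) * sumHyb f D ((i : ℕ) + 1))
          / (Fintype.card (Fin n → Bool) : ℝ) := by
      intro i
      rw [← T_eq f D i]
      have e : ∀ (r : Fin m → Bool) (x : Fin m → (Fin n → Bool)),
          pr (fun y : Fin n → Bool => predictor f D i r x y = f y)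
            = (∑ y : Fin n → Bool, if predictor f D i r x y = f y then (1:ℝ) else 0)
                / (Fintype.card (Fin n → Bool) : ℝ) := by
        intro r x
        rw [pr_eq_sum]
        refine congrArg (· / _) (Finset.sum_congr rfl fun y _ => ?_)
        congr
      simp only [e]
      simp only [← Finset.sum_div]
      congr 1
      rw [Finset.sum_comm]
      exact Finset.sum_congr rfl fun x _ => Finset.sum_comm
    simp only [step2]
    rw [← Finset.sum_div]
    have tele : (∑ i : Fin m,
          ((Fintype.card (Fin m → Bool) : ℝ) * (Fintype.card (Fin m → (Fin n → Bool)) : ℝ)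
              * (Fintype.card (Fin n → Bool) : ℝ) / 2
            + (Fintype.card (Fin n → Bool) : ℝ) * sumHyb f D (i : ℕ)
            - (Fintype.card (Fin n → Bool) : ℝ) * sumHyb f D ((i : ℕ) + 1)))
        = (m:ℝ) * ((Fintype.card (Fin m → Bool) : ℝ)
              * (Fintype.card (Fin m → (Fin n → Bool)) : ℝ)
              * (Fintype.card (Fin n → Bool) : ℝ) / 2)
          + (Fintype.card (Fin n → Bool) : ℝ) * (sumHyb f D 0 - sumHyb f D m) := by
      have t1 : (∑ i : Fin m, (sumHyb f D (i : ℕ) - sumHyb f D ((i : ℕ) + 1)))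
          = sumHyb f D 0 - sumHyb f D m := by
        rw [Fin.sum_univ_eq_sum_range (fun k => sumHyb f D k - sumHyb f D (k + 1))]
        exact Finset.sum_range_sub' (fun k => sumHyb f D k) m
      calc (∑ i : Fin m,
            ((Fintype.card (Fin m → Bool) : ℝ) * (Fintype.card (Fin m → (Fin n → Bool)) : ℝ)
                * (Fintype.card (Fin n → Bool) : ℝ) / 2
              + (Fintype.card (Fin n → Bool) : ℝ) * sumHyb f D (i : ℕ)
              - (Fintype.card (Fin n → Bool) : ℝ) * sumHyb f D ((i : ℕ) + 1)))
          = ∑ i : Fin m,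
            ((Fintype.card (Fin m → Bool) : ℝ) * (Fintype.card (Fin m → (Fin n → Bool)) : ℝ)
                * (Fintype.card (Fin n → Bool) : ℝ) / 2
              + (Fintype.card (Fin n → Bool) : ℝ)
                  * (sumHyb f D (i : ℕ) - sumHyb f D ((i : ℕ) + 1))) :=
            Finset.sum_congr rfl fun i _ => by ring
        _ = _ := by
            rw [Finset.sum_add_distrib, ← Finset.mul_sum, t1, Finset.sum_const,
              Finset.card_univ, Fintype.card_fin, nsmul_eq_mul]
    rw [tele]
    field_simp
  -- Markov / averaging step
  rw [ge_iff_le, pr_eq_sum]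
  show (1:ℝ) / (2 * (m:ℝ) ^ 2 * s)
      ≤ (∑ t : Fin m × (Fin m → Bool) × (Fin m → (Fin n → Bool)),
          if pr (fun y : Fin n → Bool => predictor f D t.1 t.2.1 t.2.2 y = f y)
              ≥ 1 / 2 + 1 / (2 * (m:ℝ) * s) then (1:ℝ) else 0)
        / (Fintype.card (Fin m × (Fin m → Bool) × (Fin m → (Fin n → Bool))) : ℝ)
  have hcard : (Fintype.card (Fin m × (Fin m → Bool) × (Fin m → (Fin n → Bool))) : ℝ)
      = (m:ℝ) * (Fintype.card (Fin m → Bool) : ℝ)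
          * (Fintype.card (Fin m → (Fin n → Bool)) : ℝ) := by
    rw [Fintype.card_prod, Fintype.card_prod, Fintype.card_fin]
    push_cast
    ring
  rw [hcard]
  have hSE0 : (0:ℝ) ≤ ∑ t : Fin m × (Fin m → Bool) × (Fin m → (Fin n → Bool)),
      if pr (fun y : Fin n → Bool => predictor f D t.1 t.2.1 t.2.2 y = f y)
          ≥ 1 / 2 + 1 / (2 * (m:ℝ) * s) then (1:ℝ) else 0 :=
    Finset.sum_nonneg fun t _ => by positivity
  have hle : ∀ t : Fin m × (Fin m → Bool) × (Fin m → (Fin n → Bool)),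
      pr (fun y : Fin n → Bool => predictor f D t.1 t.2.1 t.2.2 y = f y)
        ≤ (if pr (fun y : Fin n → Bool => predictor f D t.1 t.2.1 t.2.2 y = f y)
              ≥ 1 / 2 + 1 / (2 * (m:ℝ) * s) then (1:ℝ)
            else 1 / 2 + 1 / (2 * (m:ℝ) * s)) := by
    intro t
    by_cases hE : pr (fun y : Fin n → Bool => predictor f D t.1 t.2.1 t.2.2 y = f y)
        ≥ 1 / 2 + 1 / (2 * (m:ℝ) * s)
    · rw [if_pos hE]; exact pr_le_one _
    · rw [if_neg hE]; exact le_of_not_ge hE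
  have hsum_le : (∑ t : Fin m × (Fin m → Bool) × (Fin m → (Fin n → Bool)),
        pr (fun y : Fin n → Bool => predictor f D t.1 t.2.1 t.2.2 y = f y))
      ≤ ∑ t : Fin m × (Fin m → Bool) × (Fin m → (Fin n → Bool)),
        (if pr (fun y : Fin n → Bool => predictor f D t.1 t.2.1 t.2.2 y = f y)
            ≥ 1 / 2 + 1 / (2 * (m:ℝ) * s) then (1:ℝ)
          else 1 / 2 + 1 / (2 * (m:ℝ) * s)) :=
    Finset.sum_le_sum (fun t _ => hle t)
  have hsplit : (∑ t : Fin m × (Fin m → Bool) × (Fin m → (Fin n → Bool)),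
        if pr (fun y : Fin n → Bool => predictor f D t.1 t.2.1 t.2.2 y = f y)
            ≥ 1 / 2 + 1 / (2 * (m:ℝ) * s) then (1:ℝ)
          else 1 / 2 + 1 / (2 * (m:ℝ) * s))
      = (1 - (1 / 2 + 1 / (2 * (m:ℝ) * s)))
          * (∑ t : Fin m × (Fin m → Bool) × (Fin m → (Fin n → Bool)),
              if pr (fun y : Fin n → Bool => predictor f D t.1 t.2.1 t.2.2 y = f y)
                  ≥ 1 / 2 + 1 / (2 * (m:ℝ) * s) then (1:ℝ) else 0)
        + ((m:ℝ) * (Fintype.card (Fin m → Bool) : ℝ)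
            * (Fintype.card (Fin m → (Fin n → Bool)) : ℝ)) * (1 / 2 + 1 / (2 * (m:ℝ) * s)) := by
    have ptw : ∀ t : Fin m × (Fin m → Bool) × (Fin m → (Fin n → Bool)),
        (if pr (fun y : Fin n → Bool => predictor f D t.1 t.2.1 t.2.2 y = f y)
            ≥ 1 / 2 + 1 / (2 * (m:ℝ) * s) then (1:ℝ)
          else 1 / 2 + 1 / (2 * (m:ℝ) * s))
        = (1 - (1 / 2 + 1 / (2 * (m:ℝ) * s)))
            * (if pr (fun y : Fin n → Bool => predictor f D t.1 t.2.1 t.2.2 y = f y)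
                ≥ 1 / 2 + 1 / (2 * (m:ℝ) * s) then (1:ℝ) else 0)
          + (1 / 2 + 1 / (2 * (m:ℝ) * s)) := by
      intro t
      by_cases hE : pr (fun y : Fin n → Bool => predictor f D t.1 t.2.1 t.2.2 y = f y)
          ≥ 1 / 2 + 1 / (2 * (m:ℝ) * s)
      · rw [if_pos hE, if_pos hE]; ring
      · rw [if_neg hE, if_neg hE]; ring
    simp only [ptw]
    rw [Finset.sum_add_distrib, ← Finset.mul_sum, Finset.sum_const, Finset.card_univ,
      nsmul_eq_mul, hcard]
  rw [hsplit] at hsum_le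
  rw [hQ] at hsum_le
  -- now pure arithmetic
  have e1 : ((m:ℝ) * (Fintype.card (Fin m → Bool) : ℝ)
        * (Fintype.card (Fin m → (Fin n → Bool)) : ℝ)) * (1 / (2 * (m:ℝ) * s))
      = (Fintype.card (Fin m → Bool) : ℝ) * (Fintype.card (Fin m → (Fin n → Bool)) : ℝ)
          / (2 * s) := by
    field_simp
  have e2 : (Fintype.card (Fin m → (Fin n → Bool)) : ℝ) * (Fintype.card (Fin m → Bool) : ℝ) / s
        - (Fintype.card (Fin m → Bool) : ℝ) * (Fintype.card (Fin m → (Fin n → Bool)) : ℝ)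
            / (2 * s)
      = (Fintype.card (Fin m → Bool) : ℝ) * (Fintype.card (Fin m → (Fin n → Bool)) : ℝ)
          / (2 * s) := by
    field_simp
    ring
  have hτSE : (0:ℝ) ≤ (1 / (2 * (m:ℝ) * s))
      * (∑ t : Fin m × (Fin m → Bool) × (Fin m → (Fin n → Bool)),
          if pr (fun y : Fin n → Bool => predictor f D t.1 t.2.1 t.2.2 y = f y)
              ≥ 1 / 2 + 1 / (2 * (m:ℝ) * s) then (1:ℝ) else 0) :=
    mul_nonneg (by positivity) hSE0
  have key1 : (Fintype.card (Fin m → Bool) : ℝ)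
        * (Fintype.card (Fin m → (Fin n → Bool)) : ℝ) / (2 * s)
      ≤ (∑ t : Fin m × (Fin m → Bool) × (Fin m → (Fin n → Bool)),
          if pr (fun y : Fin n → Bool => predictor f D t.1 t.2.1 t.2.2 y = f y)
              ≥ 1 / 2 + 1 / (2 * (m:ℝ) * s) then (1:ℝ) else 0) / 2 := by
    linarith [hsum_le, hΔ, e1, e2, hτSE]
  have key : (Fintype.card (Fin m → Bool) : ℝ)
        * (Fintype.card (Fin m → (Fin n → Bool)) : ℝ)
      ≤ (∑ t : Fin m × (Fin m → Bool) × (Fin m → (Fin n → Bool)),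
          if pr (fun y : Fin n → Bool => predictor f D t.1 t.2.1 t.2.2 y = f y)
              ≥ 1 / 2 + 1 / (2 * (m:ℝ) * s) then (1:ℝ) else 0) * s := by
    rw [div_le_div_iff₀ (by positivity) (by norm_num : (0:ℝ) < 2)] at key1
    linarith
  rw [div_le_div_iff₀ (by positivity) (by positivity)]
  nlinarith [key, mul_le_mul_of_nonneg_left key (show (0:ℝ) ≤ 2 * (m:ℝ) ^ 2 by positivity),
    mul_le_mul_of_nonneg_right (show (m:ℝ) ≤ 2 * (m:ℝ) ^ 2 by nlinarith)
      (show (0:ℝ) ≤ (Fintype.card (Fin m → Bool) : ℝ)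
          * (Fintype.card (Fin m → (Fin n → Bool)) : ℝ) by positivity)]
end

section
/- (Probabilistic content of Theorem 6, learning from succinct natural proofs.) Let n ≥ 1 and m ≥ 1 be naturals, let X be the type of Boolean strings of length n, and let F be a nonempty finite set of functions X → Bool with 2·|F| ≤ 2^m. Then for every f ∈ F, with probability at least 1/(4·m²) over a uniformly random triple (i, r, x) ∈ Fin m × (Fin m → Bool) × (Fin m → X), the predictor g_{i,r,x} built from the consistency distinguisher D_F satisfies: the probability over a uniformly random y ∈ X that g_{i,r,x}(y) = f(y) is at least 1/2 + 1/(4·m). -/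
open scoped Classical

/-! ### Auxiliary counting lemmas -/

open Finset

lemma filter_inst_congr {α : Type*} (s : Finset α) (p : α → Prop)
    (h1 h2 : DecidablePred p) :
    @Finset.filter α p h1 s = @Finset.filter α p h2 s := by
  have : h1 = h2 := funext fun a => Subsingleton.elim _ _
  subst this; rfl

lemma pr_eq {α : Type*} [Fintype α] (p : α → Prop) [DecidablePred p] :
    pr p = ((Finset.univ.filter p).card : ℝ) / (Fintype.card α) := by
  simp only [pr]
  congr 2
  exact congrArg Finset.card (filter_inst_congr _ _ _ _)

lemma card_filter_comp_equiv {α : Type*} [Fintype α] (e : α ≃ α) (p : α → Prop)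
    [DecidablePred p] [DecidablePred fun a => p (e a)] :
    (univ.filter fun a => p (e a)).card = (univ.filter p).card := by
  apply Finset.card_bij' (fun a _ => e a) (fun a _ => e.symm a) <;> simp

lemma half_count {α : Type*} [Fintype α] (e : α ≃ α) (P Q : α → Prop)
    [DecidablePred P] [DecidablePred Q]
    [DecidablePred fun a => P a ∧ Q a]
    (hP : ∀ a, P (e a) ↔ ¬ P a) (hQ : ∀ a, Q (e a) ↔ Q a) :
    2 * (univ.filter fun a => P a ∧ Q a).card = (univ.filter Q).card := by
  classical
  have h1 : (univ.filter fun a => P a ∧ Q a).card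
      = (univ.filter fun a => ¬ P a ∧ Q a).card := by
    apply Finset.card_bij' (fun a _ => e a) (fun a _ => e.symm a)
    · intro a ha
      simp only [mem_filter, mem_univ, true_and] at ha ⊢
      exact ⟨fun h => (hP a).1 h ha.1, (hQ a).2 ha.2⟩
    · intro b hb
      simp only [mem_filter, mem_univ, true_and] at hb ⊢
      have hp := hP (e.symm b); have hq := hQ (e.symm b)
      rw [Equiv.apply_symm_apply] at hp hq
      constructor
      · by_contra h; exact hb.1 (hp.2 h)
      · exact hq.1 hb.2
    · intro a _; simp
    · intro a _; simp
  have h2 : (univ.filter Q) = (univ.filter fun a => P a ∧ Q a)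
      ∪ (univ.filter fun a => ¬ P a ∧ Q a) := by
    ext a; by_cases h : P a <;> simp [h]
  have h3 : Disjoint (univ.filter fun a => P a ∧ Q a)
      (univ.filter fun a => ¬ P a ∧ Q a) := by
    simp only [Finset.disjoint_left, mem_filter, mem_univ, true_and]
    tauto
  rw [h2, card_union_of_disjoint h3]
  omega

lemma card_filter_sum {β γ : Type*} [Fintype β] [Fintype γ] (p : β × γ → Prop)
    [DecidablePred p] :
    (univ.filter p).card = ∑ b : β, (univ.filter fun c => p (b, c)).card := by
  rw [Finset.card_filter, Fintype.sum_prod_type]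
  exact Finset.sum_congr rfl fun b _ => (Finset.card_filter _ _).symm

lemma card_filter_fst {β γ : Type*} [Fintype β] [Fintype γ] (p : β → Prop)
    [DecidablePred p] [DecidablePred fun t : β × γ => p t.1] :
    (univ.filter fun t : β × γ => p t.1).card = (univ.filter p).card * Fintype.card γ := by
  rw [card_filter_sum (fun t : β × γ => p t.1)]
  calc ∑ b : β, (univ.filter fun c : γ => p (b, c).1).card
      = ∑ b : β, if p b then Fintype.card γ else 0 := by
        refine Finset.sum_congr rfl fun b _ => ?_
        by_cases h : p b <;> simp [h]
    _ = ∑ _b ∈ univ.filter p, Fintype.card γ := (Finset.sum_filter _ _).symm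
    _ = _ := by rw [Finset.sum_const, smul_eq_mul]

lemma filter_card_add {α : Type*} [Fintype α] (p : α → Prop)
    [DecidablePred p] [DecidablePred fun a => ¬ p a] :
    (univ.filter p).card + (univ.filter fun a => ¬ p a).card = Fintype.card α := by
  classical
  rw [filter_inst_congr _ _ _ (fun a => instDecidableNot)]
  rw [Finset.card_filter_add_card_filter_not]
  rfl

lemma card_filter_or_disjoint {α : Type*} [Fintype α] (p q : α → Prop)
    [DecidablePred p] [DecidablePred q] [DecidablePred fun a => p a ∨ q a]
    (h : ∀ a, ¬ (p a ∧ q a)) :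
    (univ.filter fun a => p a ∨ q a).card
      = (univ.filter p).card + (univ.filter q).card := by
  classical
  rw [show (univ.filter fun a => p a ∨ q a) = univ.filter p ∪ univ.filter q by
    ext a; simp]
  rw [card_union_of_disjoint]
  simp only [Finset.disjoint_left, mem_filter, mem_univ, true_and]
  intro a hp hq
  exact h a ⟨hp, hq⟩

/-! ### Hybrid samples and counts -/

/-- Hybrid sample: first `k` coordinates labeled by `f`, the rest labeled by `r`. -/
noncomputable def samp {n m : ℕ} (f : (Fin n → Bool) → Bool) (k : ℕ)
    (p : (Fin m → Bool) × (Fin m → (Fin n → Bool))) : Fin m → (Fin n → Bool) × Bool :=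
  fun j => if (j : ℕ) < k then (p.2 j, f (p.2 j)) else (p.2 j, p.1 j)

/-- Count of `(r,x)` pairs on which the distinguisher accepts hybrid `k`. -/
noncomputable def Acnt {n m : ℕ} (F : Finset ((Fin n → Bool) → Bool))
    (f : (Fin n → Bool) → Bool) (k : ℕ) : ℕ :=
  (univ.filter fun p : (Fin m → Bool) × (Fin m → (Fin n → Bool)) =>
    consistencyDistinguisher F (samp f k p) = true).card

/-- Count of `((r,x),y)` triples on which the predictor is correct. -/
noncomputable def Scnt {n m : ℕ} (F : Finset ((Fin n → Bool) → Bool))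
    (f : (Fin n → Bool) → Bool) (i : Fin m) : ℕ :=
  (univ.filter fun t : ((Fin m → Bool) × (Fin m → (Fin n → Bool))) × (Fin n → Bool) =>
    predictor f (consistencyDistinguisher F) i t.1.1 t.1.2 t.2 = f t.2).card

/-- Count of `y`'s on which the predictor at `t = (i, r, x)` is correct. -/
noncomputable def cnt {n m : ℕ} (F : Finset ((Fin n → Bool) → Bool))
    (f : (Fin n → Bool) → Bool)
    (t : Fin m × (Fin m → Bool) × (Fin m → (Fin n → Bool))) : ℕ :=
  (univ.filter fun y : Fin n → Bool =>
    predictor f (consistencyDistinguisher F) t.1 t.2.1 t.2.2 y = f y).card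

lemma Acnt_last {n m : ℕ} (F : Finset ((Fin n → Bool) → Bool))
    (f : (Fin n → Bool) → Bool) (hf : f ∈ F) : Acnt (m := m) F f m = 0 := by
  rw [Acnt, Finset.card_eq_zero, Finset.filter_eq_empty_iff]
  intro p _
  simp only [consistencyDistinguisher, decide_eq_true_eq, not_not]
  exact ⟨f, hf, fun j => by simp [samp, j.2]⟩

lemma Acnt_zero {n m : ℕ} (F : Finset ((Fin n → Bool) → Bool))
    (hsize : 2 * F.card ≤ 2 ^ m) (f : (Fin n → Bool) → Bool) :
    2 ^ m * (2 ^ n) ^ m ≤ 2 * Acnt (m := m) F f 0 := by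
  classical
  set E : (Fin m → Bool) × (Fin m → (Fin n → Bool)) → Prop :=
    fun p => ∃ g ∈ F, ∀ j : Fin m, p.1 j = g (p.2 j) with hE
  have hAE : Acnt (m := m) F f 0 = (univ.filter fun p => ¬ E p).card := by
    rw [Acnt]
    congr 1
    apply filter_congr
    intro p _
    simp [consistencyDistinguisher, samp, hE]
  have htot : (univ.filter E).card + (univ.filter fun p => ¬ E p).card
      = 2 ^ m * (2 ^ n) ^ m := by
    rw [filter_card_add]
    simp
  have hEle : (univ.filter E).card ≤ F.card * (2 ^ n) ^ m := by
    have hsub : (univ.filter E) ⊆ F.biUnion (fun g =>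
        univ.filter fun p : (Fin m → Bool) × (Fin m → (Fin n → Bool)) =>
          ∀ j : Fin m, p.1 j = g (p.2 j)) := by
      intro p hp
      simp only [mem_filter, mem_univ, true_and, hE] at hp
      obtain ⟨g, hg, hgc⟩ := hp
      exact Finset.mem_biUnion.2 ⟨g, hg, by simp [hgc]⟩
    refine le_trans (Finset.card_le_card hsub) (le_trans (Finset.card_biUnion_le) ?_)
    refine le_trans (Finset.sum_le_card_nsmul _ _ ((2 ^ n) ^ m) ?_) (by simp [mul_comm])
    intro g _
    have himg : (univ.filter fun p : (Fin m → Bool) × (Fin m → (Fin n → Bool)) =>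
        ∀ j : Fin m, p.1 j = g (p.2 j))
        = Finset.image (fun x : Fin m → (Fin n → Bool) => ((fun j => g (x j)), x)) univ := by
      ext p
      simp only [mem_filter, mem_univ, true_and, Finset.mem_image]
      constructor
      · intro h
        refine ⟨p.2, ?_⟩
        rw [Prod.ext_iff]
        exact ⟨funext fun j => (h j).symm, rfl⟩
      · rintro ⟨x, rfl⟩
        intro j; rfl
    rw [himg]
    refine le_trans (Finset.card_image_le) ?_
    simp
  have h2 : 2 * (univ.filter E).card ≤ 2 ^ m * (2 ^ n) ^ m := by
    calc 2 * (univ.filter E).card ≤ 2 * (F.card * (2 ^ n) ^ m) := by omega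
    _ = (2 * F.card) * (2 ^ n) ^ m := by ring
    _ ≤ 2 ^ m * (2 ^ n) ^ m := Nat.mul_le_mul_right _ hsize
  omega

/-! ### Involutions -/

def flipEquiv {m : ℕ} {γ : Type*} (i : Fin m) :
    ((Fin m → Bool) × γ) ≃ ((Fin m → Bool) × γ) :=
  Function.Involutive.toPerm
    (fun p => (Function.update p.1 i (!(p.1 i)), p.2))
    (by
      intro p
      simp only [Function.update_self]
      rw [Function.update_idem]
      simp)

def swapEquiv {n m : ℕ} (i : Fin m) :
    (((Fin m → Bool) × (Fin m → (Fin n → Bool))) × (Fin n → Bool))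
      ≃ (((Fin m → Bool) × (Fin m → (Fin n → Bool))) × (Fin n → Bool)) :=
  Function.Involutive.toPerm
    (fun t => ((t.1.1, Function.update t.1.2 i t.2), t.1.2 i))
    (by
      intro t
      simp only [Function.update_self]
      rw [Function.update_idem]
      simp)

lemma samp_flip {n m : ℕ} (f : (Fin n → Bool) → Bool) (i : Fin m) (b : Bool)
    (r : Fin m → Bool) (x : Fin m → (Fin n → Bool)) :
    samp f ((i : ℕ) + 1) (Function.update r i b, x) = samp f ((i : ℕ) + 1) (r, x) := by
  funext j
  simp only [samp]
  by_cases h : (j : ℕ) < (i : ℕ) + 1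
  · simp [h]
  · have hne : j ≠ i := by
      intro hji; subst hji; omega
    simp [h, Function.update_of_ne hne]

lemma samp_succ_eq {n m : ℕ} (f : (Fin n → Bool) → Bool) (i : Fin m)
    (p : (Fin m → Bool) × (Fin m → (Fin n → Bool))) (h : p.1 i = f (p.2 i)) :
    samp f (i : ℕ) p = samp f ((i : ℕ) + 1) p := by
  funext j
  simp only [samp]
  by_cases h1 : (j : ℕ) < (i : ℕ)
  · have h2 : (j : ℕ) < (i : ℕ) + 1 := by omega
    simp [h1, h2]
  · by_cases h2 : (j : ℕ) < (i : ℕ) + 1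
    · have hji : j = i := Fin.ext (by omega)
      subst hji
      simp [h1, h2, h]
    · simp [h1, h2]

/-! ### The key hybrid step -/

lemma key_step {n m : ℕ} (F : Finset ((Fin n → Bool) → Bool))
    (f : (Fin n → Bool) → Bool) (i : Fin m) :
    2 * Scnt F f i + 2 * (2 ^ n * Acnt (m := m) F f ((i : ℕ) + 1))
      = 2 ^ n * (2 ^ m * (2 ^ n) ^ m) + 2 * (2 ^ n * Acnt (m := m) F f (i : ℕ)) := by
  classical
  -- Step A : split the predictor success into two disjoint cases
  have stepA : Scnt F f i
      = (univ.filter fun t : ((Fin m → Bool) × (Fin m → (Fin n → Bool))) × (Fin n → Bool) =>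
          t.1.1 i = f t.2
            ∧ consistencyDistinguisher F (predSample f i t.1.1 t.1.2 t.2) = false).card
      + (univ.filter fun t : ((Fin m → Bool) × (Fin m → (Fin n → Bool))) × (Fin n → Bool) =>
          t.1.1 i = !(f t.2)
            ∧ consistencyDistinguisher F (predSample f i t.1.1 t.1.2 t.2) = true).card := by
    rw [Scnt, ← card_filter_or_disjoint _ _
      (by rintro t ⟨⟨-, h1⟩, ⟨-, h2⟩⟩; rw [h1] at h2; exact Bool.false_ne_true h2)]
    congr 1
    apply filter_congr
    intro t _
    cases hd : consistencyDistinguisher F (predSample f i t.1.1 t.1.2 t.2) <;>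
      simp only [predictor, hd] <;>
      cases hr : t.1.1 i <;> cases hfy : f t.2 <;> simp
  -- Step B : the swap involution, pushed to pair-level counts
  have swap1a :
      (univ.filter fun t : ((Fin m → Bool) × (Fin m → (Fin n → Bool))) × (Fin n → Bool) =>
          t.1.1 i = f t.2
            ∧ consistencyDistinguisher F (predSample f i t.1.1 t.1.2 t.2) = false).card
      = (univ.filter fun p : (Fin m → Bool) × (Fin m → (Fin n → Bool)) =>
          p.1 i = f (p.2 i)
            ∧ consistencyDistinguisher F (samp f (i : ℕ) p) = false).card * 2 ^ n := by
    have hco : ∀ t : ((Fin m → Bool) × (Fin m → (Fin n → Bool))) × (Fin n → Bool),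
        (((swapEquiv i) t).1.1 i = f ((swapEquiv i) t).2
          ∧ consistencyDistinguisher F
              (predSample f i ((swapEquiv i) t).1.1 ((swapEquiv i) t).1.2
                ((swapEquiv i) t).2) = false)
        ↔ (t.1.1 i = f (t.1.2 i)
            ∧ consistencyDistinguisher F (samp f (i : ℕ) t.1) = false) := by
      intro t
      have hps : predSample f i t.1.1 (Function.update t.1.2 i t.2) (t.1.2 i)
          = samp f (i : ℕ) t.1 := by
        funext j
        simp only [predSample, samp]
        by_cases h1 : (j : ℕ) < (i : ℕ)
        · have hne : j ≠ i := by intro hji; subst hji; omega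
          simp [h1, Function.update_of_ne hne]
        · by_cases h2 : j = i
          · subst h2; simp [h1]
          · simp [h1, h2, Function.update_of_ne h2]
      show (t.1.1 i = f (t.1.2 i) ∧ consistencyDistinguisher F
          (predSample f i t.1.1 (Function.update t.1.2 i t.2) (t.1.2 i)) = false) ↔ _
      rw [hps]
    calc (univ.filter
          fun t : ((Fin m → Bool) × (Fin m → (Fin n → Bool))) × (Fin n → Bool) =>
            t.1.1 i = f t.2
            ∧ consistencyDistinguisher F (predSample f i t.1.1 t.1.2 t.2) = false).card
        = (univ.filter
            fun t : ((Fin m → Bool) × (Fin m → (Fin n → Bool))) × (Fin n → Bool) =>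
              (fun p : (Fin m → Bool) × (Fin m → (Fin n → Bool)) =>
                p.1 i = f (p.2 i)
                  ∧ consistencyDistinguisher F (samp f (i : ℕ) p) = false) t.1).card := by
          rw [← card_filter_comp_equiv (swapEquiv i)
            (fun t : ((Fin m → Bool) × (Fin m → (Fin n → Bool))) × (Fin n → Bool) =>
              t.1.1 i = f t.2
              ∧ consistencyDistinguisher F (predSample f i t.1.1 t.1.2 t.2) = false)]
          congr 1
          apply filter_congr
          intro t _
          exact hco t
      _ = (univ.filter
            (fun p : (Fin m → Bool) × (Fin m → (Fin n → Bool)) =>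
              p.1 i = f (p.2 i)
                ∧ consistencyDistinguisher F (samp f (i : ℕ) p) = false)).card
            * Fintype.card (Fin n → Bool) :=
          card_filter_fst (fun p : (Fin m → Bool) × (Fin m → (Fin n → Bool)) =>
            p.1 i = f (p.2 i) ∧ consistencyDistinguisher F (samp f (i : ℕ) p) = false)
      _ = _ := by simp
  -- Step B : the swap involution, pushed to pair-level counts
  have swap1b :
      (univ.filter fun t : ((Fin m → Bool) × (Fin m → (Fin n → Bool))) × (Fin n → Bool) =>
          t.1.1 i = !(f t.2)
            ∧ consistencyDistinguisher F (predSample f i t.1.1 t.1.2 t.2) = true).card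
      = (univ.filter fun p : (Fin m → Bool) × (Fin m → (Fin n → Bool)) =>
          p.1 i = !(f (p.2 i))
            ∧ consistencyDistinguisher F (samp f (i : ℕ) p) = true).card * 2 ^ n := by
    have hco : ∀ t : ((Fin m → Bool) × (Fin m → (Fin n → Bool))) × (Fin n → Bool),
        (((swapEquiv i) t).1.1 i = !(f ((swapEquiv i) t).2)
          ∧ consistencyDistinguisher F
              (predSample f i ((swapEquiv i) t).1.1 ((swapEquiv i) t).1.2
                ((swapEquiv i) t).2) = true)
        ↔ (t.1.1 i = !(f (t.1.2 i))
            ∧ consistencyDistinguisher F (samp f (i : ℕ) t.1) = true) := by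
      intro t
      have hps : predSample f i t.1.1 (Function.update t.1.2 i t.2) (t.1.2 i)
          = samp f (i : ℕ) t.1 := by
        funext j
        simp only [predSample, samp]
        by_cases h1 : (j : ℕ) < (i : ℕ)
        · have hne : j ≠ i := by intro hji; subst hji; omega
          simp [h1, Function.update_of_ne hne]
        · by_cases h2 : j = i
          · subst h2; simp [h1]
          · simp [h1, h2, Function.update_of_ne h2]
      show (t.1.1 i = !(f (t.1.2 i)) ∧ consistencyDistinguisher F
          (predSample f i t.1.1 (Function.update t.1.2 i t.2) (t.1.2 i)) = true) ↔ _
      rw [hps]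
    calc (univ.filter
          fun t : ((Fin m → Bool) × (Fin m → (Fin n → Bool))) × (Fin n → Bool) =>
            t.1.1 i = !(f t.2)
            ∧ consistencyDistinguisher F (predSample f i t.1.1 t.1.2 t.2) = true).card
        = (univ.filter
            fun t : ((Fin m → Bool) × (Fin m → (Fin n → Bool))) × (Fin n → Bool) =>
              (fun p : (Fin m → Bool) × (Fin m → (Fin n → Bool)) =>
                p.1 i = !(f (p.2 i))
                  ∧ consistencyDistinguisher F (samp f (i : ℕ) p) = true) t.1).card := by
          rw [← card_filter_comp_equiv (swapEquiv i)
            (fun t : ((Fin m → Bool) × (Fin m → (Fin n → Bool))) × (Fin n → Bool) =>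
              t.1.1 i = !(f t.2)
              ∧ consistencyDistinguisher F (predSample f i t.1.1 t.1.2 t.2) = true)]
          congr 1
          apply filter_congr
          intro t _
          exact hco t
      _ = (univ.filter
            (fun p : (Fin m → Bool) × (Fin m → (Fin n → Bool)) =>
              p.1 i = !(f (p.2 i))
                ∧ consistencyDistinguisher F (samp f (i : ℕ) p) = true)).card
            * Fintype.card (Fin n → Bool) :=
          card_filter_fst (fun p : (Fin m → Bool) × (Fin m → (Fin n → Bool)) =>
            p.1 i = !(f (p.2 i)) ∧ consistencyDistinguisher F (samp f (i : ℕ) p) = true)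
      _ = _ := by simp
  -- move hybrid index i -> i+1 under the constraint r i = f (x i)
  have hsub1 :
      (univ.filter fun p : (Fin m → Bool) × (Fin m → (Fin n → Bool)) =>
        p.1 i = f (p.2 i) ∧ consistencyDistinguisher F (samp f (i : ℕ) p) = false).card
      = (univ.filter fun p : (Fin m → Bool) × (Fin m → (Fin n → Bool)) =>
        p.1 i = f (p.2 i)
          ∧ consistencyDistinguisher F (samp f ((i : ℕ) + 1) p) = false).card := by
    congr 1
    apply filter_congr
    intro p _
    exact and_congr_right fun hp => by rw [samp_succ_eq f i p hp]
  have hsub2 :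
      (univ.filter fun p : (Fin m → Bool) × (Fin m → (Fin n → Bool)) =>
        p.1 i = f (p.2 i) ∧ consistencyDistinguisher F (samp f (i : ℕ) p) = true).card
      = (univ.filter fun p : (Fin m → Bool) × (Fin m → (Fin n → Bool)) =>
        p.1 i = f (p.2 i)
          ∧ consistencyDistinguisher F (samp f ((i : ℕ) + 1) p) = true).card := by
    congr 1
    apply filter_congr
    intro p _
    exact and_congr_right fun hp => by rw [samp_succ_eq f i p hp]
  -- the constraint r i = f (x i) halves counts which do not depend on r i
  have hflipP : ∀ p : (Fin m → Bool) × (Fin m → (Fin n → Bool)),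
      ((flipEquiv i) p).1 i = f (((flipEquiv i) p).2 i) ↔ ¬ (p.1 i = f (p.2 i)) := by
    intro p
    show (Function.update p.1 i (!(p.1 i)) i = f (p.2 i)) ↔ _
    simp only [Function.update_self]
    cases hb : p.1 i <;> cases hc : f (p.2 i) <;> simp
  have hhalf1 :
      2 * (univ.filter fun p : (Fin m → Bool) × (Fin m → (Fin n → Bool)) =>
        p.1 i = f (p.2 i)
          ∧ consistencyDistinguisher F (samp f ((i : ℕ) + 1) p) = false).card
      = (univ.filter fun p : (Fin m → Bool) × (Fin m → (Fin n → Bool)) =>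
          consistencyDistinguisher F (samp f ((i : ℕ) + 1) p) = false).card := by
    apply half_count (flipEquiv i) _ _ hflipP
    intro p
    show consistencyDistinguisher F
        (samp f ((i : ℕ) + 1) (Function.update p.1 i (!(p.1 i)), p.2)) = false ↔ _
    rw [samp_flip]
  have hhalf2 :
      2 * (univ.filter fun p : (Fin m → Bool) × (Fin m → (Fin n → Bool)) =>
        p.1 i = f (p.2 i)
          ∧ consistencyDistinguisher F (samp f ((i : ℕ) + 1) p) = true).card
      = (univ.filter fun p : (Fin m → Bool) × (Fin m → (Fin n → Bool)) =>
          consistencyDistinguisher F (samp f ((i : ℕ) + 1) p) = true).card := by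
    apply half_count (flipEquiv i) _ _ hflipP
    intro p
    show consistencyDistinguisher F
        (samp f ((i : ℕ) + 1) (Function.update p.1 i (!(p.1 i)), p.2)) = true ↔ _
    rw [samp_flip]
  -- split Acnt i according to whether r i = f (x i)
  have hAsplit : Acnt (m := m) F f (i : ℕ)
      = (univ.filter fun p : (Fin m → Bool) × (Fin m → (Fin n → Bool)) =>
          p.1 i = f (p.2 i) ∧ consistencyDistinguisher F (samp f (i : ℕ) p) = true).card
      + (univ.filter fun p : (Fin m → Bool) × (Fin m → (Fin n → Bool)) =>
          p.1 i = !(f (p.2 i))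
            ∧ consistencyDistinguisher F (samp f (i : ℕ) p) = true).card := by
    rw [Acnt, ← card_filter_or_disjoint _ _
      (by rintro p ⟨⟨h1, -⟩, ⟨h2, -⟩⟩; rw [h1] at h2; exact (Bool.eq_not_self _).mp h2)]
    congr 1
    apply filter_congr
    intro p _
    cases hb : p.1 i <;> cases hc : f (p.2 i) <;> simp [hb, hc]
  -- relate the accept and reject counts of hybrid i+1 to the total
  have hQT : Acnt (m := m) F f ((i : ℕ) + 1)
      + (univ.filter fun p : (Fin m → Bool) × (Fin m → (Fin n → Bool)) =>
          consistencyDistinguisher F (samp f ((i : ℕ) + 1) p) = false).card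
      = 2 ^ m * (2 ^ n) ^ m := by
    rw [Acnt]
    rw [show (univ.filter fun p : (Fin m → Bool) × (Fin m → (Fin n → Bool)) =>
          consistencyDistinguisher F (samp f ((i : ℕ) + 1) p) = false).card
        = (univ.filter fun p : (Fin m → Bool) × (Fin m → (Fin n → Bool)) =>
          ¬ (consistencyDistinguisher F (samp f ((i : ℕ) + 1) p) = true)).card by
      congr 1; apply filter_congr; intro p _; simp]
    rw [filter_card_add]
    simp
  have hAcnt1 : Acnt (m := m) F f ((i : ℕ) + 1)
      = (univ.filter fun p : (Fin m → Bool) × (Fin m → (Fin n → Bool)) =>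
          consistencyDistinguisher F (samp f ((i : ℕ) + 1) p) = true).card := by
    rw [Acnt]
  -- assemble everything
  rw [stepA, swap1a, swap1b, hsub1]
  rw [hsub2] at hAsplit
  set a := (univ.filter fun p : (Fin m → Bool) × (Fin m → (Fin n → Bool)) =>
    p.1 i = f (p.2 i) ∧ consistencyDistinguisher F (samp f ((i : ℕ) + 1) p) = false).card
  set b := (univ.filter fun p : (Fin m → Bool) × (Fin m → (Fin n → Bool)) =>
    p.1 i = !(f (p.2 i)) ∧ consistencyDistinguisher F (samp f (i : ℕ) p) = true).card
  set c := (univ.filter fun p : (Fin m → Bool) × (Fin m → (Fin n → Bool)) =>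
    p.1 i = f (p.2 i) ∧ consistencyDistinguisher F (samp f ((i : ℕ) + 1) p) = true).card
  set qf := (univ.filter fun p : (Fin m → Bool) × (Fin m → (Fin n → Bool)) =>
    consistencyDistinguisher F (samp f ((i : ℕ) + 1) p) = false).card
  rw [← hAcnt1] at hhalf2
  set A1 := Acnt (m := m) F f ((i : ℕ) + 1)
  set A0 := Acnt (m := m) F f (i : ℕ)
  set T := 2 ^ m * (2 ^ n) ^ m
  have hpair : 2 * a + 2 * b + 2 * A1 = T + 2 * A0 := by omega
  calc 2 * (a * 2 ^ n + b * 2 ^ n) + 2 * (2 ^ n * A1)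
      = 2 ^ n * (2 * a + 2 * b + 2 * A1) := by ring
    _ = 2 ^ n * (T + 2 * A0) := by rw [hpair]
    _ = 2 ^ n * T + 2 * (2 ^ n * A0) := by ring


/-! ### Telescoping -/

lemma telescope {n m : ℕ} (F : Finset ((Fin n → Bool) → Bool))
    (f : (Fin n → Bool) → Bool) (hf : f ∈ F) (hsize : 2 * F.card ≤ 2 ^ m) :
    (m + 1) * (2 ^ n * (2 ^ m * (2 ^ n) ^ m)) ≤ 2 * ∑ i : Fin m, Scnt F f i := by
  have main : ∀ k, k ≤ m →
      2 * (∑ j ∈ Finset.range k, (if h : j < m then Scnt F f ⟨j, h⟩ else 0))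
        + 2 * (2 ^ n * Acnt (m := m) F f k)
      = k * (2 ^ n * (2 ^ m * (2 ^ n) ^ m)) + 2 * (2 ^ n * Acnt (m := m) F f 0) := by
    intro k
    induction k with
    | zero => intro _; simp
    | succ k ih =>
      intro hk1
      have hk : k < m := hk1
      have ihk := ih (le_of_lt hk)
      have hkey := key_step F f ⟨k, hk⟩
      simp only [Fin.val_mk] at hkey
      rw [Finset.sum_range_succ, dif_pos hk]
      have hmul : (k + 1) * (2 ^ n * (2 ^ m * (2 ^ n) ^ m))
          = k * (2 ^ n * (2 ^ m * (2 ^ n) ^ m)) + 2 ^ n * (2 ^ m * (2 ^ n) ^ m) := by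
        ring
      rw [hmul]
      linarith [ihk, hkey]
  have h0 := main m le_rfl
  rw [Acnt_last F f hf] at h0
  have h00 := Acnt_zero (m := m) F hsize f
  have hfs : ∑ i : Fin m, Scnt F f i
      = ∑ j ∈ Finset.range m, (if h : j < m then Scnt F f ⟨j, h⟩ else 0) := by
    rw [← Fin.sum_univ_eq_sum_range]
    exact Finset.sum_congr rfl fun i _ => by rw [dif_pos i.isLt]
  rw [hfs]
  have h01 : 2 ^ n * (2 ^ m * (2 ^ n) ^ m) ≤ 2 ^ n * (2 * Acnt (m := m) F f 0) :=
    Nat.mul_le_mul_left _ h00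
  have hmul2 : (m + 1) * (2 ^ n * (2 ^ m * (2 ^ n) ^ m))
      = m * (2 ^ n * (2 ^ m * (2 ^ n) ^ m)) + 2 ^ n * (2 ^ m * (2 ^ n) ^ m) := by ring
  have hmul3 : 2 ^ n * (2 * Acnt (m := m) F f 0) = 2 * (2 ^ n * Acnt (m := m) F f 0) := by
    ring
  rw [hmul2]
  rw [hmul3] at h01
  simp only [mul_zero, add_zero] at h0
  linarith [h0, h01]

/-! ### The main theorem -/

set_option maxHeartbeats 2000000 in
theorem stmt4 {n m : ℕ} (hn : 1 ≤ n) (hm : 1 ≤ m)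
    (F : Finset ((Fin n → Bool) → Bool)) (hF : F.Nonempty)
    (hsize : 2 * F.card ≤ 2 ^ m) :
    ∀ f ∈ F,
      pr (fun t : Fin m × (Fin m → Bool) × (Fin m → (Fin n → Bool)) =>
          pr (fun y : Fin n → Bool =>
              predictor f (consistencyDistinguisher (m := m) F) t.1 t.2.1 t.2.2 y = f y)
            ≥ 1 / 2 + 1 / (4 * m))
        ≥ 1 / (4 * m ^ 2) := by
  intro f hf
  classical
  -- the count of `t = (i,r,x)` over which we sum
  have hX : Fintype.card (Fin n → Bool) = 2 ^ n := by simp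
  have hcardO : Fintype.card (Fin m × (Fin m → Bool) × (Fin m → (Fin n → Bool)))
      = m * (2 ^ m * (2 ^ n) ^ m) := by simp
  -- inner probability in terms of counts
  have hprt : ∀ t : Fin m × (Fin m → Bool) × (Fin m → (Fin n → Bool)),
      pr (fun y : Fin n → Bool =>
          predictor f (consistencyDistinguisher (m := m) F) t.1 t.2.1 t.2.2 y = f y)
        = (cnt F f t : ℝ) / ((2 ^ n : ℕ) : ℝ) := by
    intro t
    rw [pr_eq, hX]
    rfl
  -- total success count over all t
  have hsc : ∀ i : Fin m, Scnt F f i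
      = ∑ p : (Fin m → Bool) × (Fin m → (Fin n → Bool)), cnt F f (i, p) := by
    intro i
    rw [Scnt, card_filter_sum]
    exact Finset.sum_congr rfl fun p _ => rfl
  have hsum : ∑ t : Fin m × (Fin m → Bool) × (Fin m → (Fin n → Bool)), cnt F f t
      = ∑ i : Fin m, Scnt F f i := by
    rw [Fintype.sum_prod_type]
    exact Finset.sum_congr rfl fun i _ => (hsc i).symm
  have hlow : (m + 1) * (2 ^ n * (2 ^ m * (2 ^ n) ^ m))
      ≤ 2 * ∑ t : Fin m × (Fin m → Bool) × (Fin m → (Fin n → Bool)), cnt F f t := by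
    rw [hsum]; exact telescope F f hf hsize
  -- pass to the reals
  set Pb : Fin m × (Fin m → Bool) × (Fin m → (Fin n → Bool)) → Prop := fun t =>
    pr (fun y : Fin n → Bool =>
        predictor f (consistencyDistinguisher (m := m) F) t.1 t.2.1 t.2.2 y = f y)
      ≥ 1 / 2 + 1 / (4 * m) with hPb
  rw [ge_iff_le, pr_eq, hcardO]
  have h2n : (0:ℝ) < ((2 ^ n : ℕ) : ℝ) := by positivity
  have hGsplit := filter_card_add (α := Fin m × (Fin m → Bool) × (Fin m → (Fin n → Bool))) Pb
  rw [hcardO] at hGsplit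
  have hcntN : ∀ t : Fin m × (Fin m → Bool) × (Fin m → (Fin n → Bool)),
      cnt F f t ≤ 2 ^ n := by
    intro t
    have h := Finset.card_filter_le (Finset.univ : Finset (Fin n → Bool))
      (fun y => predictor f (consistencyDistinguisher (m := m) F) t.1 t.2.1 t.2.2 y = f y)
    simpa [cnt, hX] using h
  have hnotb : ∀ t ∈ Finset.univ.filter (fun t => ¬ Pb t),
      (cnt F f t : ℝ) ≤ (1/2 + 1/(4*(m:ℝ))) * ((2 ^ n : ℕ) : ℝ) := by
    intro t ht
    rw [Finset.mem_filter] at ht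
    have ht2 := ht.2
    simp only [hPb] at ht2
    have hlt := not_le.mp ht2
    rw [hprt t] at hlt
    have := (div_lt_iff₀ h2n).1 hlt
    linarith
  have hgoodb : ∀ t ∈ Finset.univ.filter Pb, (cnt F f t : ℝ) ≤ ((2 ^ n : ℕ) : ℝ) := by
    intro t _
    exact_mod_cast hcntN t
  have hs1 : ∑ t ∈ Finset.univ.filter Pb, (cnt F f t : ℝ)
      ≤ ((Finset.univ.filter Pb).card : ℝ) * ((2 ^ n : ℕ) : ℝ) := by
    have := Finset.sum_le_card_nsmul (Finset.univ.filter Pb)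
      (fun t => (cnt F f t : ℝ)) _ hgoodb
    simpa [nsmul_eq_mul] using this
  have hs2 : ∑ t ∈ Finset.univ.filter (fun t => ¬ Pb t), (cnt F f t : ℝ)
      ≤ ((Finset.univ.filter (fun t => ¬ Pb t)).card : ℝ)
        * ((1/2 + 1/(4*(m:ℝ))) * ((2 ^ n : ℕ) : ℝ)) := by
    have := Finset.sum_le_card_nsmul (Finset.univ.filter (fun t => ¬ Pb t))
      (fun t => (cnt F f t : ℝ)) _ hnotb
    simpa [nsmul_eq_mul] using this
  have hsplitsum := Finset.sum_filter_add_sum_filter_not Finset.univ Pb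
    (fun t => (cnt F f t : ℝ))
  have hlowR : ((m:ℝ) + 1) * (((2 ^ n : ℕ) : ℝ) * ((2 ^ m * (2 ^ n) ^ m : ℕ) : ℝ))
      ≤ 2 * ∑ t : Fin m × (Fin m → Bool) × (Fin m → (Fin n → Bool)), (cnt F f t : ℝ) := by
    exact_mod_cast hlow
  -- name the real quantities
  set gR := ((Finset.univ.filter Pb).card : ℝ) with hgR
  set ngR := ((Finset.univ.filter (fun t => ¬ Pb t)).card : ℝ) with hngR
  set tt := ((2 ^ m * (2 ^ n) ^ m : ℕ) : ℝ) with htt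
  have hGsplitR : gR + ngR = (m:ℝ) * tt := by
    rw [hgR, hngR, htt]
    exact_mod_cast hGsplit
  have hk1 : (1:ℝ) ≤ (m:ℝ) := by exact_mod_cast hm
  have hk0 : (0:ℝ) < (m:ℝ) := by linarith
  have hg0 : (0:ℝ) ≤ gR := by rw [hgR]; positivity
  have hng0 : (0:ℝ) ≤ ngR := by rw [hngR]; positivity
  have htt0 : (0:ℝ) < tt := by rw [htt]; positivity
  set u : ℝ := 1/(4*(m:ℝ)) with hu
  have hu0 : (0:ℝ) ≤ u := by rw [hu]; positivity
  have huk : (m:ℝ) * u = 1/4 := by rw [hu]; field_simp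
  have hcomb : ((m:ℝ)+1) * (((2 ^ n : ℕ) : ℝ) * tt)
      ≤ 2*(gR*((2 ^ n : ℕ) : ℝ)) + 2*(ngR*((1/2 + u)*((2 ^ n : ℕ) : ℝ))) := by
    have h := hsplitsum
    linarith [hlowR, hs1, hs2]
  have hA : ((m:ℝ)+1) * tt ≤ 2*gR + ngR + 2*(u*ngR) := by
    nlinarith [hcomb, h2n]
  have hng : ngR = (m:ℝ)*tt - gR := by linarith
  have hun : u * ngR = u*((m:ℝ)*tt) - u*gR := by rw [hng]; ring
  have h3 : u*((m:ℝ)*tt) = tt/4 := by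
    rw [show u*((m:ℝ)*tt) = ((m:ℝ)*u)*tt by ring, huk]; ring
  have key : tt ≤ 2*gR := by
    nlinarith [hA, hun, h3, hng, mul_nonneg hu0 hg0]
  -- final computation
  rw [Nat.cast_mul]
  rw [le_div_iff₀ (by positivity)]
  rw [div_mul_eq_mul_div, div_le_iff₀ (by positivity), ← htt]
  have h5 : (m:ℝ) * tt ≤ 2*((m:ℝ)*gR) := by nlinarith [key, hk0]
  have h7 : (0:ℝ) ≤ gR*((m:ℝ)*(2*(m:ℝ)-1)) := by
    apply mul_nonneg hg0
    apply mul_nonneg hk0.le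
    linarith
  nlinarith [h5, h7]
end

section
/- Let Ω be a nonempty finite type, let α be a finite type with N := card α ≥ 1, let L ≥ 1 be a natural number, and let tr : Ω → List α be a function such that 1 ≤ (tr w).length ≤ L for every w ∈ Ω. Let B be a finite subset of Ω. Then there exist a natural number t with 1 ≤ t ≤ L and a list P of elements of α with P.length = t such that, setting S := {w ∈ Ω | P is a prefix of tr w} and S₀ := {w ∈ Ω | tr w = P} (as finsets), the following hold: (i) card Ω ≤ (6·N)^t · card S; (ii) 2 · card S ≤ 3 · card S₀; (iii) card (B ∩ S) · card Ω ≤ 6^t · card B · card S. -/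
open scoped Classical

/-- One step: if the stopping condition fails at `P`, there is a one-symbol extension that
keeps a `1/(6N)` fraction of the mass and blows up the bad density by at most `6`. -/
theorem step_lemma {Ω α : Type*} [Fintype Ω] [Fintype α] (tr : Ω → List α) (B : Finset Ω)
    (P : List α)
    (hstop : 3 * (Finset.univ.filter (fun w : Ω => tr w = P)).card
      < 2 * (Finset.univ.filter (fun w : Ω => P.IsPrefix (tr w))).card) :
    ∃ a : α,
      (Finset.univ.filter (fun w : Ω => P.IsPrefix (tr w))).card
        ≤ 6 * Fintype.card α *
          (Finset.univ.filter (fun w : Ω => (P ++ [a]).IsPrefix (tr w))).card ∧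
      (B ∩ Finset.univ.filter (fun w : Ω => (P ++ [a]).IsPrefix (tr w))).card *
        (Finset.univ.filter (fun w : Ω => P.IsPrefix (tr w))).card
        ≤ 6 * (B ∩ Finset.univ.filter (fun w : Ω => P.IsPrefix (tr w))).card *
          (Finset.univ.filter (fun w : Ω => (P ++ [a]).IsPrefix (tr w))).card := by
  classical
  set S : Finset Ω := Finset.univ.filter (fun w : Ω => P.IsPrefix (tr w)) with hS
  set S₀ : Finset Ω := Finset.univ.filter (fun w : Ω => tr w = P) with hS0
  set E : α → Finset Ω :=
    fun a => Finset.univ.filter (fun w : Ω => (P ++ [a]).IsPrefix (tr w)) with hE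
  -- membership characterizations
  have hmemS : ∀ w : Ω, w ∈ S ↔ P.IsPrefix (tr w) := by
    intro w; simp [hS]
  have hmemE : ∀ (a : α) (w : Ω), w ∈ E a ↔ (P ++ [a]).IsPrefix (tr w) := by
    intro a w; simp [hE]
  have hEsub : ∀ a : α, E a ⊆ S \ S₀ := by
    intro a w hw
    rw [hmemE] at hw
    obtain ⟨s, hs⟩ := hw
    rw [List.append_assoc] at hs
    simp only [Finset.mem_sdiff, hmemS, hS0, Finset.mem_filter, Finset.mem_univ, true_and]
    constructor
    · exact ⟨a :: s, hs.symm ▸ rfl⟩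
    · intro heq
      have : (tr w).length = P.length := by rw [heq]
      rw [← hs] at this
      simp at this
  have hdisj : ∀ a ∈ (Finset.univ : Finset α), ∀ b ∈ (Finset.univ : Finset α), a ≠ b →
      Disjoint (E a) (E b) := by
    intro a _ b _ hab
    rw [Finset.disjoint_left]
    intro w hwa hwb
    rw [hmemE] at hwa hwb
    obtain ⟨s, hs⟩ := hwa
    obtain ⟨s', hs'⟩ := hwb
    rw [← hs'] at hs
    rw [List.append_assoc, List.append_assoc] at hs
    have := List.append_cancel_left hs
    simp at this
    exact hab this.1
  have hcover : S \ S₀ = Finset.univ.biUnion E := by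
    ext w
    simp only [Finset.mem_biUnion, Finset.mem_univ, true_and]
    constructor
    · intro hw
      rw [Finset.mem_sdiff] at hw
      obtain ⟨hw1, hw2⟩ := hw
      rw [hmemS] at hw1
      obtain ⟨s, hs⟩ := hw1
      match s, hs with
      | [], hs =>
        exfalso; apply hw2
        simp only [hS0, Finset.mem_filter, Finset.mem_univ, true_and]
        simpa using hs.symm
      | a :: s', hs =>
        exact ⟨a, hmemE a w |>.mpr ⟨s', by rw [List.append_assoc]; simpa using hs⟩⟩
    · intro ⟨a, hw⟩
      exact hEsub a hw
  have hS0sub : S₀ ⊆ S := by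
    intro w hw
    simp only [hS0, Finset.mem_filter, Finset.mem_univ, true_and] at hw
    rw [hmemS, hw]
  -- card splitting
  have hsplit : S.card = S₀.card + ∑ a : α, (E a).card := by
    rw [← Finset.card_sdiff_add_card_eq_card hS0sub, hcover, Finset.card_biUnion hdisj,
      add_comm]
  -- bad part sums
  have hbadsum : ∑ a : α, (B ∩ E a).card ≤ (B ∩ S).card := by
    rw [← Finset.card_biUnion (fun a _ b _ hab =>
      Finset.disjoint_of_subset_left Finset.inter_subset_right
        (Finset.disjoint_of_subset_right Finset.inter_subset_right (hdisj a (by simp) b (by simp) hab)))]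
    apply Finset.card_le_card
    intro w hw
    rw [Finset.mem_biUnion] at hw
    obtain ⟨a, _, hw⟩ := hw
    rw [Finset.mem_inter] at hw ⊢
    exact ⟨hw.1, (Finset.mem_sdiff.mp (hEsub a hw.2)).1⟩
  set b : ℕ := (B ∩ S).card with hb
  set Bad : Finset α :=
    Finset.univ.filter (fun a : α => 6 * b * (E a).card < (B ∩ E a).card * S.card) with hBad
  have hMbad : 6 * (∑ a ∈ Bad, (E a).card) ≤ S.card := by
    rcases Nat.eq_zero_or_pos b with hb0 | hbpos
    · have : Bad = ∅ := by
        rw [Finset.eq_empty_iff_forall_notMem]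
        intro a ha
        simp only [hBad, Finset.mem_filter, Finset.mem_univ, true_and] at ha
        have h1 : (B ∩ E a).card ≤ b := by
          rw [hb]
          apply Finset.card_le_card
          exact Finset.inter_subset_inter le_rfl
            (fun w hw => (Finset.mem_sdiff.mp (hEsub a hw)).1)
        have h0 : (B ∩ E a).card = 0 := le_antisymm (hb0 ▸ h1) (Nat.zero_le _)
        rw [h0, hb0] at ha
        simp at ha
      simp [this]
    · have h1 : b * (6 * ∑ a ∈ Bad, (E a).card) ≤ b * S.card := by
        have h2 : ∑ a ∈ Bad, 6 * b * (E a).card ≤ ∑ a ∈ Bad, (B ∩ E a).card * S.card :=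
          Finset.sum_le_sum (fun a ha => by
            simp only [hBad, Finset.mem_filter] at ha
            exact le_of_lt ha.2)
        have h3 : ∑ a ∈ Bad, (B ∩ E a).card * S.card ≤ b * S.card := by
          rw [← Finset.sum_mul]
          apply Nat.mul_le_mul_right
          calc ∑ a ∈ Bad, (B ∩ E a).card ≤ ∑ a : α, (B ∩ E a).card :=
                Finset.sum_le_sum_of_subset (Finset.subset_univ _)
            _ ≤ b := hbadsum
        calc b * (6 * ∑ a ∈ Bad, (E a).card) = ∑ a ∈ Bad, 6 * b * (E a).card := by
              rw [← mul_assoc, mul_comm b 6, Finset.mul_sum]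
          _ ≤ b * S.card := le_trans h2 h3
      exact Nat.le_of_mul_le_mul_left h1 hbpos
  -- mass bound
  have hmass : S.card < 3 * ∑ a : α, (E a).card := by omega
  set G : Finset α := Finset.univ \ Bad with hG
  have hsum_split : ∑ a : α, (E a).card = (∑ a ∈ Bad, (E a).card) + ∑ a ∈ G, (E a).card := by
    rw [hG, add_comm, Finset.sum_sdiff (Finset.subset_univ _)]
  have hMgood : S.card < 6 * ∑ a ∈ G, (E a).card := by omega
  have hGne : G.Nonempty := by
    rw [Finset.nonempty_iff_ne_empty]
    intro h
    rw [h] at hMgood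
    simp at hMgood
  obtain ⟨a, haG, hamax⟩ := Finset.exists_max_image G (fun a => (E a).card) hGne
  refine ⟨a, ?_, ?_⟩
  · have h1 : ∑ x ∈ G, (E x).card ≤ G.card * (E a).card := by
      calc ∑ x ∈ G, (E x).card ≤ ∑ _x ∈ G, (E a).card :=
            Finset.sum_le_sum (fun x hx => hamax x hx)
        _ = G.card * (E a).card := by rw [Finset.sum_const, smul_eq_mul]
    have h2 : G.card ≤ Fintype.card α := Finset.card_le_univ G
    calc S.card ≤ 6 * ∑ x ∈ G, (E x).card := le_of_lt hMgood
      _ ≤ 6 * (G.card * (E a).card) := by omega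
      _ ≤ 6 * Fintype.card α * (E a).card := by
          rw [mul_assoc]
          exact Nat.mul_le_mul_left 6 (Nat.mul_le_mul_right _ h2)
  · have : ¬ (6 * b * (E a).card < (B ∩ E a).card * S.card) := by
      simp only [hG, Finset.mem_sdiff, hBad, Finset.mem_filter, Finset.mem_univ, true_and] at haG
      exact haG
    push_neg at this
    calc (B ∩ E a).card * S.card ≤ 6 * b * (E a).card := this
      _ = 6 * (B ∩ S).card * (E a).card := by rw [hb]

/-- Recursion: starting from any prefix `P`, we can extend it to a prefix `P'` at which the
stopping condition holds, losing a factor at most `6N` in mass and `6` in bad density per step. -/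
theorem rec_lemma {Ω α : Type*} [Fintype Ω] [Fintype α] (tr : Ω → List α)
    (L : ℕ) (htr : ∀ w : Ω, (tr w).length ≤ L) (B : Finset Ω) :
    ∀ (n : ℕ) (P : List α), P.length ≤ L → L - P.length ≤ n →
    ∃ (d : ℕ) (P' : List α), P'.length = P.length + d ∧ P.length + d ≤ L ∧
      (2 * (Finset.univ.filter (fun w : Ω => P'.IsPrefix (tr w))).card ≤
        3 * (Finset.univ.filter (fun w : Ω => tr w = P')).card) ∧
      ((Finset.univ.filter (fun w : Ω => P.IsPrefix (tr w))).card ≤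
        (6 * Fintype.card α) ^ d *
          (Finset.univ.filter (fun w : Ω => P'.IsPrefix (tr w))).card) ∧
      ((B ∩ Finset.univ.filter (fun w : Ω => P'.IsPrefix (tr w))).card *
        (Finset.univ.filter (fun w : Ω => P.IsPrefix (tr w))).card ≤
        6 ^ d * (B ∩ Finset.univ.filter (fun w : Ω => P.IsPrefix (tr w))).card *
          (Finset.univ.filter (fun w : Ω => P'.IsPrefix (tr w))).card) := by
  intro n
  induction n with
  | zero =>
    intro P hPL hn
    refine ⟨0, P, by omega, by omega, ?_, by simp, by simp⟩
    have hPL' : P.length = L := by omega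
    have hsub : (Finset.univ.filter (fun w : Ω => P.IsPrefix (tr w))) ⊆
        (Finset.univ.filter (fun w : Ω => tr w = P)) := by
      intro w hw
      simp only [Finset.mem_filter, Finset.mem_univ, true_and] at hw ⊢
      have hlen : (tr w).length ≤ P.length := hPL' ▸ htr w
      exact (hw.eq_of_length (le_antisymm hw.length_le hlen)).symm
    have := Finset.card_le_card hsub
    omega
  | succ n ih =>
    intro P hPL hn
    by_cases hstop : 2 * (Finset.univ.filter (fun w : Ω => P.IsPrefix (tr w))).card ≤
        3 * (Finset.univ.filter (fun w : Ω => tr w = P)).card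
    · exact ⟨0, P, by omega, by omega, hstop, by simp, by simp⟩
    · push_neg at hstop
      obtain ⟨a, hmass, hbad⟩ := step_lemma tr B P hstop
      -- P.length < L
      have hScard : 0 < (Finset.univ.filter (fun w : Ω => P.IsPrefix (tr w))).card := by omega
      have hPlt : P.length < L := by
        have hne : (Finset.univ.filter (fun w : Ω => P.IsPrefix (tr w)) \
            Finset.univ.filter (fun w : Ω => tr w = P)).Nonempty := by
          rw [← Finset.card_pos]
          have hsub : (Finset.univ.filter (fun w : Ω => tr w = P)) ⊆
              (Finset.univ.filter (fun w : Ω => P.IsPrefix (tr w))) := by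
            intro w hw
            simp only [Finset.mem_filter, Finset.mem_univ, true_and] at hw ⊢
            rw [hw]
          have := Finset.card_sdiff_add_card_eq_card hsub
          omega
        obtain ⟨w, hw⟩ := hne
        simp only [Finset.mem_sdiff, Finset.mem_filter, Finset.mem_univ, true_and] at hw
        have h1 : P.length ≤ (tr w).length := hw.1.length_le
        have h2 : P.length ≠ (tr w).length := by
          intro h
          exact hw.2 (hw.1.eq_of_length h).symm
        have := htr w
        omega
      have hcpos : 0 < (Finset.univ.filter (fun w : Ω => (P ++ [a]).IsPrefix (tr w))).card := by
        by_contra h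
        push_neg at h
        interval_cases h' : (Finset.univ.filter (fun w : Ω => (P ++ [a]).IsPrefix (tr w))).card
        omega
      obtain ⟨d, P', hlen', hle', hstop', hmass', hbad'⟩ :=
        ih (P ++ [a]) (by simp; omega) (by simp; omega)
      refine ⟨d + 1, P', by simp at hlen'; omega, by simp at hle'; omega, hstop', ?_, ?_⟩
      · calc (Finset.univ.filter (fun w : Ω => P.IsPrefix (tr w))).card
            ≤ 6 * Fintype.card α *
              (Finset.univ.filter (fun w : Ω => (P ++ [a]).IsPrefix (tr w))).card := hmass
          _ ≤ 6 * Fintype.card α * ((6 * Fintype.card α) ^ d *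
              (Finset.univ.filter (fun w : Ω => P'.IsPrefix (tr w))).card) :=
            Nat.mul_le_mul_left _ hmass'
          _ = (6 * Fintype.card α) ^ (d + 1) *
              (Finset.univ.filter (fun w : Ω => P'.IsPrefix (tr w))).card := by
            rw [pow_succ]; ring
      · -- combine the two bad inequalities, cancelling the child's card
        set x := (Finset.univ.filter (fun w : Ω => P.IsPrefix (tr w))).card
        set y := (Finset.univ.filter (fun w : Ω => (P ++ [a]).IsPrefix (tr w))).card
        set z := (Finset.univ.filter (fun w : Ω => P'.IsPrefix (tr w))).card
        set bP := (B ∩ Finset.univ.filter (fun w : Ω => P.IsPrefix (tr w))).card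
        set bc := (B ∩ Finset.univ.filter (fun w : Ω => (P ++ [a]).IsPrefix (tr w))).card
        set bP' := (B ∩ Finset.univ.filter (fun w : Ω => P'.IsPrefix (tr w))).card
        -- hbad : bc * x ≤ 6 * bP * y ; hbad' : bP' * y ≤ 6^d * bc * z
        have key : (bP' * x) * y ≤ (6 ^ (d + 1) * bP * z) * y := by
          calc (bP' * x) * y = (bP' * y) * x := by ring
            _ ≤ (6 ^ d * bc * z) * x := Nat.mul_le_mul_right _ hbad'
            _ = (6 ^ d * z) * (bc * x) := by ring
            _ ≤ (6 ^ d * z) * (6 * bP * y) := Nat.mul_le_mul_left _ hbad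
            _ = (6 ^ (d + 1) * bP * z) * y := by rw [pow_succ]; ring
        exact Nat.le_of_mul_le_mul_right key hcpos

theorem stmt5 {Ω α : Type*} [Fintype Ω] [Nonempty Ω] [Fintype α]
    (hN : 1 ≤ Fintype.card α) (L : ℕ) (hL : 1 ≤ L)
    (tr : Ω → List α)
    (htr : ∀ w : Ω, 1 ≤ (tr w).length ∧ (tr w).length ≤ L)
    (B : Finset Ω) :
    ∃ (t : ℕ) (P : List α), 1 ≤ t ∧ t ≤ L ∧ P.length = t ∧
      (Fintype.card Ω ≤ (6 * Fintype.card α) ^ t *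
        (Finset.univ.filter (fun w : Ω => P.IsPrefix (tr w))).card) ∧
      (2 * (Finset.univ.filter (fun w : Ω => P.IsPrefix (tr w))).card ≤
        3 * (Finset.univ.filter (fun w : Ω => tr w = P)).card) ∧
      ((B ∩ Finset.univ.filter (fun w : Ω => P.IsPrefix (tr w))).card * Fintype.card Ω ≤
        6 ^ t * B.card *
          (Finset.univ.filter (fun w : Ω => P.IsPrefix (tr w))).card) := by
  classical
  -- the trivial prefix `[]` covers everything
  have hSnil : (Finset.univ.filter (fun w : Ω => ([] : List α).IsPrefix (tr w))) =
      (Finset.univ : Finset Ω) := by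
    apply Finset.filter_true_of_mem
    intro w _
    exact List.nil_prefix
  have hS0nil : (Finset.univ.filter (fun w : Ω => tr w = ([] : List α))) = ∅ := by
    rw [Finset.eq_empty_iff_forall_notMem]
    intro w hw
    simp only [Finset.mem_filter, Finset.mem_univ, true_and] at hw
    have := (htr w).1
    rw [hw] at this
    simp at this
  have hΩpos : 0 < Fintype.card Ω := Fintype.card_pos
  have hstop0 : 3 * (Finset.univ.filter (fun w : Ω => tr w = ([] : List α))).card <
      2 * (Finset.univ.filter (fun w : Ω => ([] : List α).IsPrefix (tr w))).card := by
    rw [hSnil, hS0nil, Finset.card_univ]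
    simpa using hΩpos
  obtain ⟨a, hmass0, hbad0⟩ := step_lemma tr B ([] : List α) hstop0
  rw [hSnil, Finset.card_univ] at hmass0 hbad0
  rw [Finset.inter_univ] at hbad0
  simp only [List.nil_append] at hmass0 hbad0
  obtain ⟨d, P', hlen', hle', hstop', hmass', hbad'⟩ :=
    rec_lemma tr L (fun w => (htr w).2) B (L - 1) [a] (by simpa using hL) (by simp)
  simp at hlen' hle'
  refine ⟨d + 1, P', by omega, by omega, by omega, ?_, hstop', ?_⟩
  · calc Fintype.card Ω
        ≤ 6 * Fintype.card α *
          (Finset.univ.filter (fun w : Ω => ([a] : List α).IsPrefix (tr w))).card := hmass0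
      _ ≤ 6 * Fintype.card α * ((6 * Fintype.card α) ^ d *
          (Finset.univ.filter (fun w : Ω => P'.IsPrefix (tr w))).card) :=
        Nat.mul_le_mul_left _ hmass'
      _ = (6 * Fintype.card α) ^ (d + 1) *
          (Finset.univ.filter (fun w : Ω => P'.IsPrefix (tr w))).card := by
        rw [pow_succ]; ring
  · set y := (Finset.univ.filter (fun w : Ω => ([a] : List α).IsPrefix (tr w))).card
    set z := (Finset.univ.filter (fun w : Ω => P'.IsPrefix (tr w))).card
    set bc := (B ∩ Finset.univ.filter (fun w : Ω => ([a] : List α).IsPrefix (tr w))).card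
    set bP' := (B ∩ Finset.univ.filter (fun w : Ω => P'.IsPrefix (tr w))).card
    have hypos : 0 < y := by
      rcases Nat.eq_zero_or_pos y with h | h
      · rw [h, mul_zero] at hmass0; omega
      · exact h
    -- hbad0 : bc * Fintype.card Ω ≤ 6 * B.card * y ; hbad' : bP' * y ≤ 6 ^ d * bc * z
    have key : (bP' * Fintype.card Ω) * y ≤ (6 ^ (d + 1) * B.card * z) * y := by
      calc (bP' * Fintype.card Ω) * y = (bP' * y) * Fintype.card Ω := by ring
        _ ≤ (6 ^ d * bc * z) * Fintype.card Ω := Nat.mul_le_mul_right _ hbad'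
        _ = (6 ^ d * z) * (bc * Fintype.card Ω) := by ring
        _ ≤ (6 ^ d * z) * (6 * B.card * y) := Nat.mul_le_mul_left _ hbad0
        _ = (6 ^ (d + 1) * B.card * z) * y := by rw [pow_succ]; ring
    exact Nat.le_of_mul_le_mul_right key hypos
end

section
/- (Theorem 7, MIN player; Newman, Althöfer, Lipton–Young.) Let r ≥ 1 and c ≥ 1 be naturals, let M : Fin r → Fin c → ℝ be a matrix, let ε > 0 be a real number, and let k ≥ 1 be a natural number with (k : ℝ) ≥ Real.log c / (2·ε²). Then there exists a multiset S of elements of Fin r with card S = k such that for every j ∈ Fin c, (∑_{i ∈ S} M i j) / k ≤ v(M) + ε·(Mmax − Mmin), where the sum is over the multiset S with multiplicity. -/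
open Real in
lemma key_ineq {t : ℝ} (ht0 : 0 ≤ t) (ht1 : t ≤ 1) {h : ℝ} (hh : 0 ≤ h) :
    1 - t + t * Real.exp h ≤ Real.exp (t * h + h ^ 2 / 8) := by
  set D : ℝ → ℝ := fun x => 1 - t + t * Real.exp x with hD
  have hDpos : ∀ x, 0 < D x := by
    intro x
    rcases eq_or_lt_of_le ht0 with h0 | h0
    · simp [hD, ← h0]
    · have := Real.exp_pos x
      have : 0 < t * Real.exp x := by positivity
      simp only [hD]; linarith
  have hDd : ∀ x, HasDerivAt D (t * Real.exp x) x := by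
    intro x
    exact ((Real.hasDerivAt_exp x).const_mul t).const_add (1 - t)
  set q1 : ℝ → ℝ := fun x => t * Real.exp x / D x with hq1
  have hq1d : ∀ x, HasDerivAt q1 (t * Real.exp x * (1 - t) / (D x) ^ 2) x := by
    intro x
    have := ((Real.hasDerivAt_exp x).const_mul t).div (hDd x) (hDpos x).ne'
    exact this.congr_deriv (by simp only [D]; ring)
  set G1 : ℝ → ℝ := fun x => t + x / 4 - q1 x with hG1
  have hG1d : ∀ x, HasDerivAt G1 (1 / 4 - t * Real.exp x * (1 - t) / (D x) ^ 2) x := by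
    intro x
    exact ((hasDerivAt_id x).div_const 4).const_add t |>.sub (hq1d x)
  have hq2le : ∀ x, t * Real.exp x * (1 - t) / (D x) ^ 2 ≤ 1 / 4 := by
    intro x
    set u : ℝ := t * Real.exp x / D x with hu
    have hne : (1 - t + t * Real.exp x) ≠ 0 := by
      have := (hDpos x).ne'; simpa [hD] using this
    have h1u : 1 - u = (1 - t) / D x := by
      simp only [hu, hD]
      field_simp
      ring
    have : t * Real.exp x * (1 - t) / (D x) ^ 2 = u * (1 - u) := by
      rw [h1u, hu, div_mul_div_comm, sq]
    rw [this]
    nlinarith [sq_nonneg (u - 1 / 2)]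
  have hG1mono : Monotone G1 := by
    apply monotone_of_deriv_nonneg (fun x => (hG1d x).differentiableAt)
    intro x
    rw [(hG1d x).deriv]
    linarith [hq2le x]
  have hG10 : G1 0 = 0 := by
    simp [hG1, hq1, hD]
  have hG1nonneg : ∀ x, 0 ≤ x → 0 ≤ G1 x := fun x hx => hG10 ▸ hG1mono hx
  set G : ℝ → ℝ := fun x => t * x + x ^ 2 / 8 - Real.log (D x) with hG
  have hGd : ∀ x, HasDerivAt G (G1 x) x := by
    intro x
    have hlog : HasDerivAt (fun x => Real.log (D x)) (t * Real.exp x / D x) x :=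
      (hDd x).log (hDpos x).ne'
    have : HasDerivAt G (t + x * 2 / 8 - t * Real.exp x / D x) x := by
      exact ((hasDerivAt_id x).const_mul t |>.add ((hasDerivAt_pow 2 x).div_const 8)).sub hlog
        |>.congr_deriv (by push_cast; ring)
    convert this using 1
    simp [hG1, hq1]; ring
  have hGmono : MonotoneOn G (Set.Ici (0:ℝ)) := by
    apply monotoneOn_of_deriv_nonneg (convex_Ici 0)
      (fun x _ => (hGd x).continuousAt.continuousWithinAt)
      (fun x _ => (hGd x).differentiableAt.differentiableWithinAt)
    intro x hx
    rw [(hGd x).deriv]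
    exact hG1nonneg x (le_of_lt (by simpa using hx))
  have hG0 : G 0 = 0 := by simp [hG, hD]
  have hGh : 0 ≤ G h := by
    have := hGmono (Set.self_mem_Ici) (Set.mem_Ici.2 hh) hh
    linarith [hG0 ▸ this]
  have : Real.log (D h) ≤ t * h + h ^ 2 / 8 := by simp [hG] at hGh; linarith
  calc D h = Real.exp (Real.log (D h)) := (Real.exp_log (hDpos h)).symm
    _ ≤ Real.exp (t * h + h ^ 2 / 8) := Real.exp_le_exp.2 this



/-- The largest entry of the matrix `M`. -/
noncomputable def Mmax {r c : ℕ} (M : Fin r → Fin c → ℝ) : ℝ :=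
  ⨆ i : Fin r, ⨆ j : Fin c, M i j

/-- The smallest entry of the matrix `M`. -/
noncomputable def Mmin {r c : ℕ} (M : Fin r → Fin c → ℝ) : ℝ :=
  ⨅ i : Fin r, ⨅ j : Fin c, M i j

/-- The MIN-value of the zero-sum game with payoff matrix `M`: the infimum over
mixed strategies `p` of the row player of the maximum over pure strategies `j`
of the column player of the expected payoff. -/
noncomputable def minValue {r c : ℕ} (M : Fin r → Fin c → ℝ) : ℝ :=
  ⨅ p : {p : Fin r → ℝ // (∀ i, 0 ≤ p i) ∧ ∑ i, p i = 1},
    ⨆ j : Fin c, ∑ i, p.1 i * M i j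

lemma Mmin_le_entry {r c : ℕ} (M : Fin r → Fin c → ℝ) (i : Fin r) (j : Fin c) :
    Mmin M ≤ M i j := by
  have h1 : Mmin M ≤ ⨅ j' : Fin c, M i j' :=
    ciInf_le (Set.Finite.bddBelow (Set.finite_range _)) i
  exact h1.trans (ciInf_le (Set.Finite.bddBelow (Set.finite_range _)) j)

lemma entry_le_Mmax {r c : ℕ} (M : Fin r → Fin c → ℝ) (i : Fin r) (j : Fin c) :
    M i j ≤ Mmax M := by
  have h1 : M i j ≤ ⨆ j' : Fin c, M i j' :=
    le_ciSup (Set.Finite.bddAbove (Set.finite_range _)) j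
  exact h1.trans (le_ciSup (f := fun i' : Fin r => ⨆ j' : Fin c, M i' j')
    (Set.Finite.bddAbove (Set.finite_range _)) i)

/-- Step 1: the per-column mgf bound (Hoeffding's lemma, averaged form). -/
lemma step1 {r : ℕ} (p : Fin r → ℝ) (hp0 : ∀ i, 0 ≤ p i) (hp1 : ∑ i, p i = 1)
    (Y : Fin r → ℝ) (a b : ℝ) (ha : ∀ i, a ≤ Y i) (hb : ∀ i, Y i ≤ b)
    (hab : a < b) {ε : ℝ} (hε : 0 < ε) :
    ∑ i, p i * Real.exp ((4 * ε / (b - a)) * Y i) ≤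
      Real.exp ((4 * ε / (b - a)) * (∑ i, p i * Y i) + 2 * ε ^ 2) := by
  have hba : (0:ℝ) < b - a := by linarith
  set L : ℝ := 4 * ε / (b - a) with hL
  have hLpos : 0 < L := by positivity
  set μ : ℝ := ∑ i, p i * Y i with hμ
  have hμa : a ≤ μ := by
    have : ∑ i, p i * a ≤ ∑ i, p i * Y i :=
      Finset.sum_le_sum fun i _ => mul_le_mul_of_nonneg_left (ha i) (hp0 i)
    rwa [← Finset.sum_mul, hp1, one_mul] at this
  have hμb : μ ≤ b := by
    have : ∑ i, p i * Y i ≤ ∑ i, p i * b :=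
      Finset.sum_le_sum fun i _ => mul_le_mul_of_nonneg_left (hb i) (hp0 i)
    rwa [← Finset.sum_mul, hp1, one_mul] at this
  set A : ℝ := Real.exp (L * a) with hA
  set B : ℝ := Real.exp (L * b) with hB
  have conv : ∀ i, Real.exp (L * Y i) ≤ (b - Y i) / (b - a) * A + (Y i - a) / (b - a) * B := by
    intro i
    have h1 : (0:ℝ) ≤ (b - Y i) / (b - a) := div_nonneg (by linarith [hb i]) hba.le
    have h2 : (0:ℝ) ≤ (Y i - a) / (b - a) := div_nonneg (by linarith [ha i]) hba.le
    have h3 : (b - Y i) / (b - a) + (Y i - a) / (b - a) = 1 := by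
      field_simp
      ring
    have := convexOn_exp.2 (Set.mem_univ (L * a)) (Set.mem_univ (L * b)) h1 h2 h3
    simp only [smul_eq_mul] at this
    have harg : (b - Y i) / (b - a) * (L * a) + (Y i - a) / (b - a) * (L * b) = L * Y i := by
      field_simp
      ring
    rwa [harg] at this
  have sum_bound : ∑ i, p i * Real.exp (L * Y i) ≤
      (b - μ) / (b - a) * A + (μ - a) / (b - a) * B := by
    have h1 : ∑ i, p i * Real.exp (L * Y i) ≤
        ∑ i, p i * ((b - Y i) / (b - a) * A + (Y i - a) / (b - a) * B) :=
      Finset.sum_le_sum fun i _ => mul_le_mul_of_nonneg_left (conv i) (hp0 i)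
    have h2 : ∑ i, p i * ((b - Y i) / (b - a) * A + (Y i - a) / (b - a) * B) =
        (b - μ) / (b - a) * A + (μ - a) / (b - a) * B := by
      have e1 : ∀ i, p i * ((b - Y i) / (b - a) * A + (Y i - a) / (b - a) * B) =
          (p i * b - p i * Y i) * (A / (b - a)) + (p i * Y i - p i * a) * (B / (b - a)) := by
        intro i; field_simp
      rw [Finset.sum_congr rfl fun i _ => e1 i, Finset.sum_add_distrib,
        ← Finset.sum_mul, ← Finset.sum_mul, Finset.sum_sub_distrib, Finset.sum_sub_distrib,
        ← Finset.sum_mul, ← Finset.sum_mul, hp1]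
      rw [hμ]
      field_simp
    exact h1.trans_eq h2
  set t : ℝ := (μ - a) / (b - a) with ht
  have ht0 : 0 ≤ t := div_nonneg (by linarith) hba.le
  have ht1 : t ≤ 1 := by rw [ht, div_le_one hba]; linarith
  have hBA : B = A * Real.exp (L * (b - a)) := by
    rw [hA, hB, ← Real.exp_add]
    congr 1
    ring
  have h1t : (b - μ) / (b - a) = 1 - t := by
    rw [ht]
    field_simp
    ring
  have key := key_ineq ht0 ht1 (h := L * (b - a)) (by positivity)
  have hLba : L * (b - a) = 4 * ε := by
    rw [hL]; field_simp
  have hApos : 0 < A := Real.exp_pos _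
  calc ∑ i, p i * Real.exp (L * Y i) ≤ (b - μ) / (b - a) * A + (μ - a) / (b - a) * B :=
        sum_bound
    _ = A * (1 - t + t * Real.exp (L * (b - a))) := by
        rw [h1t, hBA, ← ht]; ring
    _ ≤ A * Real.exp (t * (L * (b - a)) + (L * (b - a)) ^ 2 / 8) :=
        mul_le_mul_of_nonneg_left key hApos.le
    _ = Real.exp (L * μ + 2 * ε ^ 2) := by
        rw [hA, ← Real.exp_add]
        congr 1
        rw [hLba, ht, hL]
        field_simp [hba.ne']
        ring

lemma claim_delta {r c : ℕ} (hr : 1 ≤ r) (hc : 1 ≤ c) (M : Fin r → Fin c → ℝ)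
    (ε : ℝ) (hε : 0 < ε) (k : ℕ) (hk : 1 ≤ k)
    (hklog : (k : ℝ) ≥ Real.log c / (2 * ε ^ 2)) (δ : ℝ) (hδ : 0 < δ) :
    ∃ S : Sym (Fin r) k, ∀ j : Fin c,
      ((S.1).map (fun i => M i j)).sum ≤
        (k : ℝ) * (minValue M + ε * (Mmax M - Mmin M) + δ) := by
  classical
  haveI : Nonempty (Fin r) := Fin.pos_iff_nonempty.1 (by omega)
  haveI : Nonempty (Fin c) := Fin.pos_iff_nonempty.1 (by omega)
  have hkpos : (0:ℝ) < k := by exact_mod_cast Nat.lt_of_lt_of_le Nat.zero_lt_one hk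
  have hcpos : (0:ℝ) < c := by exact_mod_cast Nat.lt_of_lt_of_le Nat.zero_lt_one hc
  set a : ℝ := Mmin M with haa
  set b : ℝ := Mmax M with hbb
  obtain ⟨i0⟩ := (inferInstance : Nonempty (Fin r))
  obtain ⟨j0⟩ := (inferInstance : Nonempty (Fin c))
  have hab : a ≤ b := (Mmin_le_entry M i0 j0).trans (entry_le_Mmax M i0 j0)
  -- a near-optimal strategy
  haveI hPne : Nonempty {p : Fin r → ℝ // (∀ i, 0 ≤ p i) ∧ ∑ i, p i = 1} := by
    refine ⟨⟨fun _ => (r:ℝ)⁻¹, fun i => by positivity, ?_⟩⟩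
    have hrne : (r:ℝ) ≠ 0 := by positivity
    simp [Finset.sum_const, Finset.card_univ, hrne]
  have hδ2 : 0 < δ / 2 := by linarith
  obtain ⟨p, hp⟩ : ∃ p : {p : Fin r → ℝ // (∀ i, 0 ≤ p i) ∧ ∑ i, p i = 1},
      (⨆ j : Fin c, ∑ i, p.1 i * M i j) < minValue M + δ / 2 := by
    apply exists_lt_of_ciInf_lt
    exact lt_add_of_pos_right _ hδ2
  rcases eq_or_lt_of_le hab with heq | hlt'
  · -- degenerate case: constant matrix
    have hall : ∀ i j, M i j = a := fun i j =>
      le_antisymm (heq ▸ entry_le_Mmax M i j) (Mmin_le_entry M i j)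
    have hval : minValue M = a := by
      have h1 : ∀ q : {p : Fin r → ℝ // (∀ i, 0 ≤ p i) ∧ ∑ i, p i = 1},
          (⨆ j : Fin c, ∑ i, q.1 i * M i j) = a := by
        intro q
        have h2 : ∀ j : Fin c, ∑ i, q.1 i * M i j = a := by
          intro j
          simp only [hall, ← Finset.sum_mul, q.2.2, one_mul]
        simp only [h2, ciSup_const]
      simp only [minValue, h1, ciInf_const]
    refine ⟨Sym.replicate k i0, fun j => ?_⟩
    have hrep : ((Sym.replicate k i0 : Sym (Fin r) k).1.map (fun i => M i j)).sum
        = (k : ℝ) * a := by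
      simp [Sym.replicate, Multiset.map_replicate, Multiset.sum_replicate, hall]
    have hba0 : b - a = 0 := by rw [heq]; ring
    rw [hrep, hval, hba0]
    nlinarith [mul_pos hkpos hδ]
  · -- main case a < b
    have hba : (0:ℝ) < b - a := by linarith
    set L : ℝ := 4 * ε / (b - a) with hL
    have hLpos : 0 < L := by positivity
    set w : (Fin k → Fin r) → ℝ := fun ω => ∏ t, p.1 (ω t) with hw
    have hw0 : ∀ ω, 0 ≤ w ω := fun ω => Finset.prod_nonneg fun t _ => p.2.1 _
    have hw1 : ∑ ω : Fin k → Fin r, w ω = 1 := by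
      rw [hw, ← Fintype.piFinset_univ, ← Finset.prod_univ_sum]
      simp [p.2.2]
    set μ : Fin c → ℝ := fun j => ∑ i, p.1 i * M i j with hμdef
    have hμlt : ∀ j, μ j < minValue M + δ / 2 := fun j =>
      lt_of_le_of_lt (le_ciSup (Set.Finite.bddAbove (Set.finite_range _)) j) hp
    set Sf : Fin c → (Fin k → Fin r) → ℝ := fun j ω => ∑ t, M (ω t) j with hSf
    have hmgf : ∀ j, ∑ ω : Fin k → Fin r, w ω * Real.exp (L * Sf j ω) ≤
        Real.exp ((k : ℝ) * (L * μ j + 2 * ε ^ 2)) := by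
      intro j
      have e1 : ∀ ω : Fin k → Fin r, w ω * Real.exp (L * Sf j ω) =
          ∏ t, (p.1 (ω t) * Real.exp (L * M (ω t) j)) := by
        intro ω
        rw [Finset.prod_mul_distrib]
        congr 1
        rw [← Real.exp_sum]
        congr 1
        rw [hSf, Finset.mul_sum]
      have hstep := step1 p.1 p.2.1 p.2.2 (fun i => M i j) a b
        (fun i => Mmin_le_entry M i j) (fun i => entry_le_Mmax M i j) hlt' hε
      have hsumnn : 0 ≤ ∑ i, p.1 i * Real.exp (L * M i j) :=
        Finset.sum_nonneg fun i _ => mul_nonneg (p.2.1 i) (Real.exp_pos _).le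
      calc ∑ ω : Fin k → Fin r, w ω * Real.exp (L * Sf j ω)
          = ∑ ω : Fin k → Fin r, ∏ t, (p.1 (ω t) * Real.exp (L * M (ω t) j)) :=
            Finset.sum_congr rfl fun ω _ => e1 ω
        _ = ∏ _t : Fin k, ∑ i, p.1 i * Real.exp (L * M i j) := by
            rw [Finset.prod_univ_sum]
            rw [Fintype.piFinset_univ]
        _ = (∑ i, p.1 i * Real.exp (L * M i j)) ^ k := by
            rw [Finset.prod_const, Finset.card_univ, Fintype.card_fin]
        _ ≤ (Real.exp (L * μ j + 2 * ε ^ 2)) ^ k := by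
            apply pow_le_pow_left₀ hsumnn
            rw [hL]
            exact hstep
        _ = Real.exp ((k : ℝ) * (L * μ j + 2 * ε ^ 2)) := by
            rw [← Real.exp_nat_mul]
    set Bad : Fin c → Finset (Fin k → Fin r) := fun j =>
      Finset.univ.filter (fun ω =>
        (k : ℝ) * μ j + (k : ℝ) * (ε * (b - a)) + (k : ℝ) * (δ / 2) < Sf j ω) with hBad
    set thr : Fin c → ℝ := fun j =>
      (k : ℝ) * μ j + (k : ℝ) * (ε * (b - a)) + (k : ℝ) * (δ / 2) with hthrdef
    have hbadle : ∀ j, ∑ ω ∈ Bad j, w ω ≤ Real.exp (-(L * ((k : ℝ) * (δ / 2)))) / c := by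
      intro j
      have hterm : ∀ ω ∈ Bad j, w ω ≤
          (w ω * Real.exp (L * Sf j ω)) * Real.exp (-(L * thr j)) := by
        intro ω hω
        rw [hBad, Finset.mem_filter] at hω
        have h1 : Real.exp (L * thr j) ≤ Real.exp (L * Sf j ω) :=
          Real.exp_le_exp.2 (mul_le_mul_of_nonneg_left hω.2.le hLpos.le)
        have h2 : w ω = (w ω * Real.exp (L * thr j)) * Real.exp (-(L * thr j)) := by
          rw [mul_assoc, ← Real.exp_add]
          simp
        calc w ω = (w ω * Real.exp (L * thr j)) * Real.exp (-(L * thr j)) := h2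
          _ ≤ (w ω * Real.exp (L * Sf j ω)) * Real.exp (-(L * thr j)) :=
            mul_le_mul_of_nonneg_right
              (mul_le_mul_of_nonneg_left h1 (hw0 ω)) (Real.exp_pos _).le
      have hchain : ∑ ω ∈ Bad j, w ω ≤
          Real.exp ((k : ℝ) * (L * μ j + 2 * ε ^ 2)) * Real.exp (-(L * thr j)) := by
        calc ∑ ω ∈ Bad j, w ω
            ≤ ∑ ω ∈ Bad j, (w ω * Real.exp (L * Sf j ω)) * Real.exp (-(L * thr j)) :=
              Finset.sum_le_sum hterm
          _ = (∑ ω ∈ Bad j, w ω * Real.exp (L * Sf j ω)) * Real.exp (-(L * thr j)) :=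
              (Finset.sum_mul _ _ _).symm
          _ ≤ (∑ ω : Fin k → Fin r, w ω * Real.exp (L * Sf j ω)) * Real.exp (-(L * thr j)) := by
              apply mul_le_mul_of_nonneg_right _ (Real.exp_pos _).le
              apply Finset.sum_le_sum_of_subset_of_nonneg (Finset.subset_univ _)
              intro ω _ _
              exact mul_nonneg (hw0 ω) (Real.exp_pos _).le
          _ ≤ Real.exp ((k : ℝ) * (L * μ j + 2 * ε ^ 2)) * Real.exp (-(L * thr j)) :=
              mul_le_mul_of_nonneg_right (hmgf j) (Real.exp_pos _).le
      have hexp : (k : ℝ) * (L * μ j + 2 * ε ^ 2) + (-(L * thr j)) =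
          (-(2 * (k : ℝ) * ε ^ 2)) + (-(L * ((k : ℝ) * (δ / 2)))) := by
        rw [hthrdef, hL]
        field_simp
        ring
      have hlogc : Real.log c ≤ 2 * (k : ℝ) * ε ^ 2 := by
        have h2e : (0:ℝ) < 2 * ε ^ 2 := by positivity
        have := (div_le_iff₀ h2e).1 hklog
        linarith
      have hc1 : Real.exp (-(2 * (k : ℝ) * ε ^ 2)) ≤ 1 / c := by
        calc Real.exp (-(2 * (k : ℝ) * ε ^ 2)) ≤ Real.exp (-(Real.log c)) :=
              Real.exp_le_exp.2 (by linarith)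
          _ = 1 / c := by rw [Real.exp_neg, Real.exp_log hcpos, one_div]
      calc ∑ ω ∈ Bad j, w ω
          ≤ Real.exp ((k : ℝ) * (L * μ j + 2 * ε ^ 2)) * Real.exp (-(L * thr j)) := hchain
        _ = Real.exp (-(2 * (k : ℝ) * ε ^ 2)) * Real.exp (-(L * ((k : ℝ) * (δ / 2)))) := by
            rw [← Real.exp_add, hexp, Real.exp_add]
        _ ≤ (1 / c) * Real.exp (-(L * ((k : ℝ) * (δ / 2)))) :=
            mul_le_mul_of_nonneg_right hc1 (Real.exp_pos _).le
        _ = Real.exp (-(L * ((k : ℝ) * (δ / 2)))) / c := by ring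
    -- union bound
    set B : Finset (Fin k → Fin r) := Finset.univ.biUnion Bad with hB
    have hBbound : ∑ ω ∈ B, w ω ≤ ∑ j : Fin c, ∑ ω ∈ Bad j, w ω := by
      have hind : ∀ ω ∈ B, w ω ≤ ∑ j : Fin c, (if ω ∈ Bad j then w ω else 0) := by
        intro ω hω
        rw [hB, Finset.mem_biUnion] at hω
        obtain ⟨j1, _, hj1⟩ := hω
        have : (if ω ∈ Bad j1 then w ω else 0) = w ω := if_pos hj1
        calc w ω = (if ω ∈ Bad j1 then w ω else 0) := this.symm
          _ ≤ ∑ j : Fin c, (if ω ∈ Bad j then w ω else 0) :=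
            Finset.single_le_sum (f := fun j => if ω ∈ Bad j then w ω else 0)
              (fun j _ => by by_cases h : ω ∈ Bad j <;> simp [h, hw0 ω]) (Finset.mem_univ j1)
      calc ∑ ω ∈ B, w ω ≤ ∑ ω ∈ B, ∑ j : Fin c, (if ω ∈ Bad j then w ω else 0) :=
            Finset.sum_le_sum hind
        _ ≤ ∑ ω : Fin k → Fin r, ∑ j : Fin c, (if ω ∈ Bad j then w ω else 0) := by
            apply Finset.sum_le_sum_of_subset_of_nonneg (Finset.subset_univ _)
            intro ω _ _
            apply Finset.sum_nonneg
            intro j _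
            split
            · exact hw0 ω
            · exact le_refl 0
        _ = ∑ j : Fin c, ∑ ω : Fin k → Fin r, (if ω ∈ Bad j then w ω else 0) :=
            Finset.sum_comm
        _ = ∑ j : Fin c, ∑ ω ∈ Bad j, w ω := by
            refine Finset.sum_congr rfl fun j _ => ?_
            rw [Finset.sum_ite_mem, Finset.univ_inter]
    have hBlt : ∑ ω ∈ B, w ω < 1 := by
      have h2 : ∑ j : Fin c, ∑ ω ∈ Bad j, w ω ≤
          ∑ _j : Fin c, Real.exp (-(L * ((k : ℝ) * (δ / 2)))) / c :=
        Finset.sum_le_sum fun j _ => hbadle j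
      have h3 : ∑ _j : Fin c, Real.exp (-(L * ((k : ℝ) * (δ / 2)))) / c =
          Real.exp (-(L * ((k : ℝ) * (δ / 2)))) := by
        rw [Finset.sum_const, Finset.card_univ, Fintype.card_fin, nsmul_eq_mul]
        field_simp
      have h4 : Real.exp (-(L * ((k : ℝ) * (δ / 2)))) < 1 := by
        rw [Real.exp_lt_one_iff]
        have : 0 < L * ((k : ℝ) * (δ / 2)) := by positivity
        linarith
      linarith [hBbound]
    obtain ⟨ω, hω⟩ : ∃ ω : Fin k → Fin r, ω ∉ B := by
      by_contra hno
      push_neg at hno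
      have : B = Finset.univ := Finset.eq_univ_iff_forall.2 hno
      rw [this, hw1] at hBlt
      exact lt_irrefl _ hBlt
    have hgood : ∀ j, Sf j ω ≤ thr j := by
      intro j
      by_contra hcon
      push_neg at hcon
      exact hω (Finset.mem_biUnion.2 ⟨j, Finset.mem_univ j,
        Finset.mem_filter.2 ⟨Finset.mem_univ ω, hcon⟩⟩)
    refine ⟨⟨Multiset.map ω Finset.univ.val, by simp⟩, fun j => ?_⟩
    have hsum : ((Multiset.map ω Finset.univ.val).map (fun i => M i j)).sum = Sf j ω := by
      rw [Multiset.map_map]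
      simp only [hSf]
      rw [Finset.sum_eq_multiset_sum]
      rfl
    rw [hsum]
    have h5 : thr j ≤ (k : ℝ) * (minValue M + ε * (b - a) + δ) := by
      have := hμlt j
      rw [hthrdef]
      nlinarith [hkpos]
    exact (hgood j).trans h5

theorem stmt6 {r c : ℕ} (hr : 1 ≤ r) (hc : 1 ≤ c) (M : Fin r → Fin c → ℝ)
    (ε : ℝ) (hε : 0 < ε) (k : ℕ) (hk : 1 ≤ k)
    (hklog : (k : ℝ) ≥ Real.log c / (2 * ε ^ 2)) :
    ∃ S : Multiset (Fin r), Multiset.card S = k ∧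
      ∀ j : Fin c,
        (S.map (fun i => M i j)).sum / (k : ℝ) ≤
          minValue M + ε * (Mmax M - Mmin M) := by
  classical
  haveI : Nonempty (Fin r) := Fin.pos_iff_nonempty.1 (by omega)
  haveI : Nonempty (Fin c) := Fin.pos_iff_nonempty.1 (by omega)
  haveI : Nonempty (Sym (Fin r) k) := ⟨Sym.replicate k (Classical.arbitrary _)⟩
  have hkpos : (0:ℝ) < k := by
    exact_mod_cast Nat.lt_of_lt_of_le Nat.zero_lt_one hk
  have hcne : (Finset.univ : Finset (Fin c)).Nonempty := Finset.univ_nonempty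
  set F : Sym (Fin r) k → ℝ :=
    fun S => Finset.univ.sup' hcne (fun j => ((S.1).map (fun i => M i j)).sum) with hF
  obtain ⟨S₀, _, hS₀⟩ := Finset.exists_min_image Finset.univ F Finset.univ_nonempty
  set X := (k:ℝ) * (minValue M + ε * (Mmax M - Mmin M)) with hX
  have hbound : F S₀ ≤ X := by
    by_contra hcon
    push_neg at hcon
    have hη : 0 < (F S₀ - X) / (2 * (k:ℝ)) := div_pos (by linarith) (by positivity)
    obtain ⟨S, hS⟩ := claim_delta hr hc M ε hε k hk hklog _ hη
    have h1 : F S ≤ (k:ℝ) * (minValue M + ε * (Mmax M - Mmin M) + (F S₀ - X) / (2 * (k:ℝ))) :=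
      Finset.sup'_le _ _ fun j _ => hS j
    have h3 : (k:ℝ) * (minValue M + ε * (Mmax M - Mmin M) + (F S₀ - X) / (2 * (k:ℝ))) =
        X + (F S₀ - X) / 2 := by
      rw [hX]
      field_simp
    have h2 : F S₀ ≤ F S := hS₀ S (Finset.mem_univ S)
    rw [h3] at h1
    linarith
  refine ⟨S₀.1, S₀.2, fun j => ?_⟩
  rw [div_le_iff₀ hkpos]
  calc ((S₀.1).map (fun i => M i j)).sum ≤ F S₀ :=
        Finset.le_sup' (fun j => ((S₀.1).map (fun i => M i j)).sum) (Finset.mem_univ j)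
    _ ≤ X := hbound
    _ = (minValue M + ε * (Mmax M - Mmin M)) * (k:ℝ) := by rw [hX]; ring
end

section
/- (Existence of Nisan–Wigderson designs.) For all natural numbers n ≥ 2 and d ≥ 2, there exist a natural number m with n^(2d) ≤ m ≤ 2·n^(2d) and a function J : Fin (2^n) → Finset (Fin m) such that J is injective, (J i).card = n^d for every i, and (J i ∩ J i').card ≤ n for all i ≠ i'. -/
open Polynomial

theorem stmt9 (n d : ℕ) (hn : 2 ≤ n) (hd : 2 ≤ d) :
    ∃ m : ℕ, n ^ (2 * d) ≤ m ∧ m ≤ 2 * n ^ (2 * d) ∧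
      ∃ J : Fin (2 ^ n) → Finset (Fin m),
        Function.Injective J ∧
        (∀ i, (J i).card = n ^ d) ∧
        (∀ i i', i ≠ i' → (J i ∩ J i').card ≤ n) := by
  classical
  set N := n ^ d with hN
  have hN2 : 2 ≤ N := le_trans hn (Nat.le_self_pow (by omega) n)
  obtain ⟨p, hp, hlt, hle⟩ := Nat.exists_prime_lt_and_le_two_mul N (by omega)
  haveI : Fact p.Prime := ⟨hp⟩
  haveI : NeZero p := ⟨hp.ne_zero⟩
  -- embedding of indices into coefficient vectors
  have hcard : Fintype.card (Fin (2 ^ n)) ≤ Fintype.card (Fin n → ZMod p) := by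
    simp only [Fintype.card_fin, Fintype.card_fun, ZMod.card]
    exact Nat.pow_le_pow_left hp.two_le n
  obtain ⟨c⟩ := Function.Embedding.nonempty_of_card_le hcard
  -- the polynomials
  set F : Fin (2 ^ n) → (ZMod p)[X] :=
    fun i => ∑ k : Fin n, Polynomial.monomial (k : ℕ) (c i k) with hF
  have hcoeff : ∀ i (k : Fin n), (F i).coeff (k : ℕ) = c i k := by
    intro i k
    rw [hF]
    rw [Polynomial.finset_sum_coeff]
    rw [Finset.sum_eq_single k]
    · simp
    · intro b _ hb
      rw [Polynomial.coeff_monomial, if_neg (fun h => hb (Fin.val_injective h))]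
    · simp
  have hcoeff0 : ∀ i (m : ℕ), n ≤ m → (F i).coeff m = 0 := by
    intro i m hm
    rw [hF, Polynomial.finset_sum_coeff]
    apply Finset.sum_eq_zero
    intro k _
    rw [Polynomial.coeff_monomial, if_neg]
    omega
  have hFinj : Function.Injective F := by
    intro i i' h
    apply c.injective
    funext k
    rw [← hcoeff i k, ← hcoeff i' k, h]
  -- the embedding of evaluation points
  set emb : Fin N → ZMod p := fun x => ((x : ℕ) : ZMod p) with hemb
  have hembinj : Function.Injective emb := by
    intro x y h
    have hx : ((x : ℕ) : ZMod p).val = (x : ℕ) := ZMod.val_cast_of_lt (by omega)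
    have hy : ((y : ℕ) : ZMod p).val = (y : ℕ) := ZMod.val_cast_of_lt (by omega)
    apply Fin.val_injective
    rw [← hx, ← hy]
    exact congrArg ZMod.val h
  -- the key: few agreements
  have hagree : ∀ i i' : Fin (2 ^ n), i ≠ i' →
      (Finset.univ.filter (fun x : Fin N =>
        (F i).eval (emb x) = (F i').eval (emb x))).card ≤ n := by
    intro i i' hii
    set g := F i - F i' with hg
    have hg0 : g ≠ 0 := sub_ne_zero.mpr (fun h => hii (hFinj h))
    have hdeg : g.natDegree ≤ n := by
      apply Polynomial.natDegree_le_iff_coeff_eq_zero.mpr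
      intro m hm
      rw [hg, Polynomial.coeff_sub, hcoeff0 i m (le_of_lt hm),
        hcoeff0 i' m (le_of_lt hm), sub_zero]
    calc (Finset.univ.filter (fun x : Fin N =>
        (F i).eval (emb x) = (F i').eval (emb x))).card
        ≤ g.roots.toFinset.card := by
          apply Finset.card_le_card_of_injOn emb
          · intro x hx
            simp only [Finset.mem_coe, Finset.mem_filter] at hx ⊢
            rw [Multiset.mem_toFinset, Polynomial.mem_roots hg0]
            simp [Polynomial.IsRoot, hg, hx.2]
          · exact fun x _ y _ h => hembinj h
      _ ≤ Multiset.card g.roots := g.roots.toFinset_card_le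
      _ ≤ g.natDegree := Polynomial.card_roots' g
      _ ≤ n := hdeg
  -- the design
  have hNN : N * N = n ^ (2 * d) := by rw [hN, ← pow_add, two_mul]
  refine ⟨N * p, ?_, ?_, ?_⟩
  · calc n ^ (2 * d) = N * N := hNN.symm
      _ ≤ N * p := Nat.mul_le_mul_left _ (le_of_lt hlt)
  · calc N * p ≤ N * (2 * N) := Nat.mul_le_mul_left _ hle
      _ = 2 * (N * N) := by ring
      _ = 2 * n ^ (2 * d) := by rw [hNN]
  set f : Fin (2 ^ n) → Fin N → Fin (N * p) := fun i x =>
    finProdFinEquiv (x, ⟨((F i).eval (emb x)).val, ZMod.val_lt _⟩) with hf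
  have hfinj : ∀ i, Function.Injective (f i) := by
    intro i x y h
    rw [hf] at h
    have := finProdFinEquiv.injective h
    exact (Prod.mk.injEq _ _ _ _ ▸ this).1
  set J : Fin (2 ^ n) → Finset (Fin (N * p)) :=
    fun i => Finset.image (f i) Finset.univ with hJ
  have hcardJ : ∀ i, (J i).card = N := by
    intro i
    rw [hJ, Finset.card_image_of_injective _ (hfinj i), Finset.card_univ,
      Fintype.card_fin]
  have hint : ∀ i i', i ≠ i' → (J i ∩ J i').card ≤ n := by
    intro i i' hii
    have hsub : J i ∩ J i' ⊆ (Finset.univ.filter (fun x : Fin N =>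
        (F i).eval (emb x) = (F i').eval (emb x))).image (f i) := by
      intro a ha
      rw [Finset.mem_inter] at ha
      obtain ⟨x, _, hx⟩ := Finset.mem_image.mp ha.1
      obtain ⟨y, _, hy⟩ := Finset.mem_image.mp ha.2
      have hpair : ((x, ⟨((F i).eval (emb x)).val, ZMod.val_lt _⟩) : Fin N × Fin p)
          = (y, ⟨((F i').eval (emb y)).val, ZMod.val_lt _⟩) :=
        finProdFinEquiv.injective (hx.trans hy.symm)
      have hxy : x = y := congrArg Prod.fst hpair
      have hsnd : ((F i).eval (emb x)).val = ((F i').eval (emb y)).val :=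
        congrArg (fun q : Fin N × Fin p => (q.2 : ℕ)) hpair
      subst hxy
      apply Finset.mem_image.mpr
      refine ⟨x, ?_, hx⟩
      rw [Finset.mem_filter]
      exact ⟨Finset.mem_univ _, ZMod.val_injective p hsnd⟩
    calc (J i ∩ J i').card ≤ _ := Finset.card_le_card hsub
      _ ≤ _ := Finset.card_image_le
      _ ≤ n := hagree i i' hii
  refine ⟨J, ?_, hcardJ, hint⟩
  intro i i' h
  by_contra hii
  have h1 : (J i ∩ J i').card = N := by rw [h, Finset.inter_self, hcardJ]
  have h2 := hint i i' hii
  have h3 : n < N := by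
    calc n = n ^ 1 := (pow_one n).symm
      _ < n ^ d := Nat.pow_lt_pow_right (by omega) (by omega)
  omega
end

section
/- Let Ω be a nonempty finite type, let α be a finite type with N := card α ≥ 1, let L ≥ 1 be a natural number, and let tr : Ω → List α be a function such that 1 ≤ (tr w).length ≤ L for every w ∈ Ω. Then there exist a natural number t with 1 ≤ t ≤ L and a list P of elements of α with P.length = t such that, setting S := {w ∈ Ω | P is a prefix of tr w} and S₀ := {w ∈ Ω | tr w = P} (as finsets): (i) card Ω ≤ (3·N)^t · card S, and (ii) 2 · card S ≤ 3 · card S₀. -/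
open scoped Classical

private lemma stmt12_aux {Ω α : Type*} [Fintype Ω] [Nonempty Ω] [Fintype α] [Inhabited α]
    (L : ℕ) (hL : 1 ≤ L) (tr : Ω → List α)
    (htr : ∀ w : Ω, 1 ≤ (tr w).length ∧ (tr w).length ≤ L) :
    ∀ (k t : ℕ) (P : List α), P.length = t → t + k = L →
      Fintype.card Ω ≤ (3 * Fintype.card α) ^ t *
        (Finset.univ.filter (fun w : Ω => P.IsPrefix (tr w))).card →
      ∃ (t' : ℕ) (P' : List α), 1 ≤ t' ∧ t' ≤ L ∧ P'.length = t' ∧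
        (Fintype.card Ω ≤ (3 * Fintype.card α) ^ t' *
          (Finset.univ.filter (fun w : Ω => P'.IsPrefix (tr w))).card) ∧
        (2 * (Finset.univ.filter (fun w : Ω => P'.IsPrefix (tr w))).card ≤
          3 * (Finset.univ.filter (fun w : Ω => tr w = P')).card) := by
  intro k
  induction k with
  | zero =>
    intro t P hP hkL hinv
    have htL : t = L := by omega
    have hSS : (Finset.univ.filter (fun w : Ω => P.IsPrefix (tr w))) =
        (Finset.univ.filter (fun w : Ω => tr w = P)) := by
      ext w
      simp only [Finset.mem_filter, Finset.mem_univ, true_and]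
      constructor
      · rintro ⟨r, hr⟩
        have hlen : (tr w).length ≤ L := (htr w).2
        have : P.length + r.length = (tr w).length := by
          rw [← hr, List.length_append]
        have hr0 : r = [] := by
          have : r.length = 0 := by omega
          exact List.length_eq_zero_iff.mp this
        rw [← hr, hr0, List.append_nil]
      · intro h
        rw [h]
    refine ⟨t, P, by omega, by omega, hP, hinv, ?_⟩
    rw [hSS]
    omega
  | succ k ih =>
    intro t P hP hkL hinv
    by_cases hstop : 2 * (Finset.univ.filter (fun w : Ω => P.IsPrefix (tr w))).card ≤
        3 * (Finset.univ.filter (fun w : Ω => tr w = P)).card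
    · -- stopping case; need 1 ≤ t
      rcases Nat.eq_zero_or_pos t with ht0 | ht1
      · -- t = 0 : contradiction, since S₀ = ∅ and S = univ is nonempty
        exfalso
        have hPnil : P = [] := List.length_eq_zero_iff.mp (hP.trans ht0)
        have hS0 : (Finset.univ.filter (fun w : Ω => tr w = P)) = ∅ := by
          apply Finset.filter_false_of_mem
          intro w _
          intro h
          have := (htr w).1
          rw [h, hPnil] at this
          simp at this
        have hS : (Finset.univ.filter (fun w : Ω => P.IsPrefix (tr w))) = Finset.univ := by
          apply Finset.filter_true_of_mem
          intro w _
          rw [hPnil]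
          exact List.nil_prefix
        rw [hS0, hS] at hstop
        have hcard : 0 < (Finset.univ : Finset Ω).card := Finset.univ_nonempty.card_pos
        simp only [Finset.card_empty, Nat.mul_zero, Nat.le_zero, Nat.mul_eq_zero] at hstop
        omega
      · exact ⟨t, P, ht1, by omega, hP, hinv, hstop⟩
    · -- extend the prefix by one symbol
      set N := Fintype.card α with hNdef
      set S := Finset.univ.filter (fun w : Ω => P.IsPrefix (tr w)) with hSdef
      set S₀ := Finset.univ.filter (fun w : Ω => tr w = P) with hS0def
      set T := Finset.univ.filter (fun w : Ω => P.IsPrefix (tr w) ∧ tr w ≠ P) with hTdef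
      have hsplit : S₀.card + T.card = S.card := by
        have h1 : S.filter (fun w => tr w = P) = S₀ := by
          ext w
          simp only [hSdef, hS0def, Finset.mem_filter, Finset.mem_univ, true_and]
          constructor
          · rintro ⟨-, h⟩; exact h
          · intro h; exact ⟨by rw [h], h⟩
        have h2 : S.filter (fun w => ¬ tr w = P) = T := by
          ext w
          simp only [hSdef, hTdef, Finset.mem_filter, Finset.mem_univ, true_and]
          try tauto
        rw [← h1, ← h2]
        exact Finset.card_filter_add_card_filter_not (fun w => tr w = P)
      have hS3T : S.card ≤ 3 * T.card := by omega
      -- pigeonhole over the next symbol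
      have hsum : T.card = ∑ a : α, (T.filter (fun w => ((tr w).drop P.length).headI = a)).card :=
        Finset.card_eq_sum_card_fiberwise (fun w _ => Finset.mem_univ _)
      have hsumle : ∑ _a : α, T.card ≤
          ∑ a : α, N * (T.filter (fun w => ((tr w).drop P.length).headI = a)).card := by
        rw [← Finset.mul_sum, ← hsum, Finset.sum_const, smul_eq_mul, Finset.card_univ,
          ← hNdef]
      obtain ⟨a, -, ha⟩ := Finset.exists_le_of_sum_le Finset.univ_nonempty hsumle
      -- the fiber is contained in the set of strings extending P ++ [a]
      have hsub : T.filter (fun w => ((tr w).drop P.length).headI = a) ⊆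
          Finset.univ.filter (fun w : Ω => (P ++ [a]).IsPrefix (tr w)) := by
        intro w hw
        simp only [hTdef, Finset.mem_filter, Finset.mem_univ, true_and] at hw ⊢
        obtain ⟨⟨⟨r, hr⟩, hne⟩, hfa⟩ := hw
        cases r with
        | nil =>
          rw [List.append_nil] at hr
          exact absurd hr.symm hne
        | cons b rt =>
          have hb : b = a := by
            rw [← hr, List.drop_left] at hfa
            exact hfa
          refine ⟨rt, ?_⟩
          rw [← hr, hb, List.append_assoc]
          rfl
      have hfib : (T.filter (fun w => ((tr w).drop P.length).headI = a)).card ≤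
          (Finset.univ.filter (fun w : Ω => (P ++ [a]).IsPrefix (tr w))).card :=
        Finset.card_le_card hsub
      -- new invariant
      have hinv' : Fintype.card Ω ≤ (3 * N) ^ (t + 1) *
          (Finset.univ.filter (fun w : Ω => (P ++ [a]).IsPrefix (tr w))).card := by
        calc Fintype.card Ω ≤ (3 * N) ^ t * S.card := hinv
          _ ≤ (3 * N) ^ t * (3 * T.card) := Nat.mul_le_mul_left _ hS3T
          _ ≤ (3 * N) ^ t * (3 * (N * (T.filter
                (fun w => ((tr w).drop P.length).headI = a)).card)) := by
              exact Nat.mul_le_mul_left _ (Nat.mul_le_mul_left _ ha)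
          _ ≤ (3 * N) ^ t * (3 * (N * (Finset.univ.filter
                (fun w : Ω => (P ++ [a]).IsPrefix (tr w))).card)) := by
              exact Nat.mul_le_mul_left _ (Nat.mul_le_mul_left _ (Nat.mul_le_mul_left _ hfib))
          _ = (3 * N) ^ (t + 1) *
              (Finset.univ.filter (fun w : Ω => (P ++ [a]).IsPrefix (tr w))).card := by
              ring
      exact ih (t + 1) (P ++ [a]) (by simp [hP]) (by omega) hinv'

theorem stmt12 {Ω α : Type*} [Fintype Ω] [Nonempty Ω] [Fintype α]
    (hN : 1 ≤ Fintype.card α) (L : ℕ) (hL : 1 ≤ L)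
    (tr : Ω → List α)
    (htr : ∀ w : Ω, 1 ≤ (tr w).length ∧ (tr w).length ≤ L) :
    ∃ (t : ℕ) (P : List α), 1 ≤ t ∧ t ≤ L ∧ P.length = t ∧
      (Fintype.card Ω ≤ (3 * Fintype.card α) ^ t *
        (Finset.univ.filter (fun w : Ω => P.IsPrefix (tr w))).card) ∧
      (2 * (Finset.univ.filter (fun w : Ω => P.IsPrefix (tr w))).card ≤
        3 * (Finset.univ.filter (fun w : Ω => tr w = P)).card) := by
  haveI : Nonempty α := Fintype.card_pos_iff.mp hN
  haveI : Inhabited α := Classical.inhabited_of_nonempty ‹_›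
  have hinv : Fintype.card Ω ≤ (3 * Fintype.card α) ^ 0 *
      (Finset.univ.filter (fun w : Ω => ([] : List α).IsPrefix (tr w))).card := by
    have : (Finset.univ.filter (fun w : Ω => ([] : List α).IsPrefix (tr w))) =
        (Finset.univ : Finset Ω) := by
      apply Finset.filter_true_of_mem
      intro w _
      exact List.nil_prefix
    rw [this]
    simp [Finset.card_univ]
  exact stmt12_aux L hL tr htr L 0 [] rfl (by omega) hinv
end
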